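/- arXiv:2012.06220 — 3 statements merged into one kernel-verified Lean document; each statement's English description precedes it below -/
import Mathlib

section
/- For Re(z) > 0, the function log G(z) has the representation log G(z) = -∫₁^∞ g(u) u^{-z-1} du, where g(u) = ∑_{n=1}^∞ (1/n) χ^{*n}(u), χ is the indicator function of [e, e²], and * denotes multiplicative convolution (f*h)(x) = ∫₁^x f(x/u) h(u) du/u. -/
open Complex

/-- Multiplicative convolution of functions supported on `[1,∞)`:
`(f*h)(x) = ∫₁^x f(x/u) h(u) du/u`. -/
noncomputable def mconv (f h : ℝ → ℝ) : ℝ → ℝ := fun x => ∫ u in (1:ℝ)..x, f (x / u) * h u / u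

/-- `χ`, the indicator function of `[e, e²]`. -/
noncomputable def chi : ℝ → ℝ := Set.indicator (Set.Icc (Real.exp 1) (Real.exp 2)) 1

/-- `chiPow n = χ^{*(n+1)}`, the `(n+1)`-fold multiplicative convolution of `χ`. -/
noncomputable def chiPow : ℕ → (ℝ → ℝ)
  | 0 => chi
  | n + 1 => mconv (chiPow n) chi

/-- `g(u) = ∑_{n≥1} χ^{*n}(u)/n`. -/
noncomputable def g (u : ℝ) : ℝ := ∑' n : ℕ, chiPow n u / (n + 1)

open MeasureTheory Set

namespace LogGAux

lemma one_lt_e : (1:ℝ) < Real.exp 1 := by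
  simpa using Real.exp_lt_exp.mpr (zero_lt_one (α := ℝ))

lemma chi_nonneg (u : ℝ) : 0 ≤ chi u := by
  unfold chi
  by_cases h : u ∈ Icc (Real.exp 1) (Real.exp 2) <;> simp [h]

lemma chi_le_one (u : ℝ) : chi u ≤ 1 := by
  unfold chi
  by_cases h : u ∈ Icc (Real.exp 1) (Real.exp 2) <;> simp [h]

lemma chi_eq_zero_of_lt {u : ℝ} (h : u < Real.exp 1) : chi u = 0 := by
  unfold chi
  rw [indicator_of_notMem]
  intro hu
  exact absurd hu.1 (not_le.mpr h)

lemma measurable_chi : Measurable chi :=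
  measurable_const.indicator measurableSet_Icc

lemma mconv_eq (f : ℝ → ℝ) (h0 : ∀ t, t < 1 → f t = 0) (x : ℝ) :
    mconv f chi x = ∫ u in Ioi (1:ℝ), f (x / u) * chi u / u := by
  rcases le_or_gt 1 x with hx | hx
  · rw [mconv, intervalIntegral.integral_of_le hx,
      ← integral_indicator measurableSet_Ioc, ← integral_indicator measurableSet_Ioi]
    congr 1
    ext u
    by_cases h1 : u ∈ Ioc (1:ℝ) x
    · rw [indicator_of_mem h1, indicator_of_mem (mem_Ioi.mpr h1.1)]
    · rw [indicator_of_notMem h1]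
      by_cases h2 : u ∈ Ioi (1:ℝ)
      · rw [indicator_of_mem h2]
        have hu1 : (1:ℝ) < u := h2
        have hxu : x < u := by
          by_contra hle
          exact h1 ⟨hu1, not_lt.mp hle⟩
        have : x / u < 1 := (div_lt_one (lt_trans one_pos hu1)).mpr hxu
        rw [h0 _ this, zero_mul, zero_div]
      · rw [indicator_of_notMem h2]
  · have hL : mconv f chi x = 0 := by
      rw [mconv]
      have h : EqOn (fun u => f (x / u) * chi u / u) (fun _ => (0:ℝ)) (uIcc 1 x) := by
        intro u hu
        have hu1 : u ≤ 1 := by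
          rcases mem_uIcc.mp hu with h | h
          · linarith [h.2]
          · linarith [h.2]
        have : chi u = 0 := chi_eq_zero_of_lt (lt_of_le_of_lt hu1 one_lt_e)
        simp [this]
      rw [intervalIntegral.integral_congr h]
      simp
    have hR : ∀ u ∈ Ioi (1:ℝ), f (x / u) * chi u / u = 0 := by
      intro u hu
      have hu0 : (0:ℝ) < u := lt_trans one_pos hu
      have : x / u < 1 := by
        rcases le_or_gt x 0 with h | h
        · exact lt_of_le_of_lt (div_nonpos_iff.mpr (Or.inr ⟨h, hu0.le⟩)) one_pos
        · exact (div_lt_one hu0).mpr (lt_trans hx hu)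
      rw [h0 _ this, zero_mul, zero_div]
    rw [hL, setIntegral_congr_fun measurableSet_Ioi hR]
    simp

lemma mconv_zero {f : ℝ → ℝ} (h0 : ∀ t, t < 1 → f t = 0) {x : ℝ} (hx : x < 1) :
    mconv f chi x = 0 := by
  rw [mconv_eq f h0 x]
  have hR : ∀ u ∈ Ioi (1:ℝ), f (x / u) * chi u / u = 0 := by
    intro u hu
    have hu0 : (0:ℝ) < u := lt_trans one_pos hu
    have : x / u < 1 := by
      rcases le_or_gt x 0 with h | h
      · exact lt_of_le_of_lt (div_nonpos_iff.mpr (Or.inr ⟨h, hu0.le⟩)) one_pos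
      · exact (div_lt_one hu0).mpr (lt_trans hx hu)
    rw [h0 _ this, zero_mul, zero_div]
  rw [setIntegral_congr_fun measurableSet_Ioi hR]
  simp

lemma measurable_mconv {f : ℝ → ℝ} (hm : Measurable f) (h0 : ∀ t, t < 1 → f t = 0) :
    Measurable (mconv f chi) := by
  have key : mconv f chi = fun x => ∫ u, ({p : ℝ × ℝ | 1 < p.2}.indicator
      (fun p => f (p.1 / p.2) * chi p.2 / p.2) (x, u)) := by
    funext x
    rw [mconv_eq f h0 x, ← integral_indicator measurableSet_Ioi]
    have hfun : ∀ u : ℝ, (Ioi (1:ℝ)).indicator (fun u => f (x / u) * chi u / u) u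
        = {p : ℝ × ℝ | 1 < p.2}.indicator (fun p => f (p.1 / p.2) * chi p.2 / p.2) (x, u) := by
      intro u
      by_cases h : (1:ℝ) < u
      · rw [indicator_of_mem (mem_Ioi.mpr h),
          indicator_of_mem (show (x, u) ∈ {p : ℝ × ℝ | 1 < p.2} from h)]
      · rw [indicator_of_notMem (show u ∉ Ioi (1:ℝ) from h),
          indicator_of_notMem (show (x, u) ∉ {p : ℝ × ℝ | 1 < p.2} from h)]
    simp only [hfun]
  rw [key]
  have hK : Measurable ({p : ℝ × ℝ | 1 < p.2}.indicator
      (fun p => f (p.1 / p.2) * chi p.2 / p.2)) := by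
    apply Measurable.indicator
    · exact ((hm.comp (measurable_fst.div measurable_snd)).mul
        (measurable_chi.comp measurable_snd)).div measurable_snd
    · exact measurable_snd measurableSet_Ioi
  exact hK.stronglyMeasurable.integral_prod_right'.measurable

lemma mconv_nonneg {f : ℝ → ℝ} (h0 : ∀ t, t < 1 → f t = 0) (hnn : ∀ t, 0 ≤ f t) (x : ℝ) :
    0 ≤ mconv f chi x := by
  rw [mconv_eq f h0 x]
  apply setIntegral_nonneg measurableSet_Ioi
  intro u hu
  exact div_nonneg (mul_nonneg (hnn _) (chi_nonneg _)) (lt_trans one_pos hu).le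

lemma chi_div_eq (u : ℝ) :
    chi u / u = (Icc (Real.exp 1) (Real.exp 2)).indicator (fun t => t⁻¹) u := by
  unfold chi
  by_cases h : u ∈ Icc (Real.exp 1) (Real.exp 2) <;> simp [h, one_div]

lemma integrableOn_chi_div : IntegrableOn (fun u => chi u / u) (Ioi (1:ℝ)) := by
  rw [show (fun u => chi u / u)
      = (Icc (Real.exp 1) (Real.exp 2)).indicator (fun t : ℝ => t⁻¹) from funext chi_div_eq]
  have hIcc : IntegrableOn (fun t : ℝ => t⁻¹) (Icc (Real.exp 1) (Real.exp 2)) := by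
    apply ContinuousOn.integrableOn_compact isCompact_Icc
    apply continuousOn_inv₀.mono
    intro t ht
    exact ne_of_gt (lt_of_lt_of_le (Real.exp_pos 1) ht.1)
  exact (hIcc.integrable_indicator measurableSet_Icc).integrableOn

lemma Icc_subset_Ioi : Icc (Real.exp 1) (Real.exp 2) ⊆ Ioi (1:ℝ) :=
  fun t ht => lt_of_lt_of_le one_lt_e ht.1

lemma integral_chi_div : ∫ u in Ioi (1:ℝ), chi u / u = 1 := by
  simp only [chi_div_eq]
  rw [setIntegral_indicator measurableSet_Icc,
    inter_eq_self_of_subset_right Icc_subset_Ioi, integral_Icc_eq_integral_Ioc,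
    ← intervalIntegral.integral_of_le (Real.exp_le_exp.mpr one_le_two),
    integral_inv]
  · rw [← Real.exp_sub]
    norm_num [Real.log_exp]
  · rw [uIcc_of_le (Real.exp_le_exp.mpr one_le_two)]
    intro h
    exact (Real.exp_pos 1).not_ge h.1

lemma mconv_le_one {f : ℝ → ℝ} (h0 : ∀ t, t < 1 → f t = 0) (hnn : ∀ t, 0 ≤ f t)
    (hle : ∀ t, f t ≤ 1) (x : ℝ) : mconv f chi x ≤ 1 := by
  rw [mconv_eq f h0 x]
  calc ∫ u in Ioi (1:ℝ), f (x / u) * chi u / u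
      ≤ ∫ u in Ioi (1:ℝ), chi u / u := by
        refine integral_mono_of_nonneg ?_ integrableOn_chi_div ?_
        · filter_upwards [ae_restrict_mem measurableSet_Ioi] with u hu
          have hu0 : (0:ℝ) < u := lt_trans one_pos hu
          exact div_nonneg (mul_nonneg (hnn _) (chi_nonneg _)) hu0.le
        · filter_upwards [ae_restrict_mem measurableSet_Ioi] with u hu
          have hu0 : (0:ℝ) < u := lt_trans one_pos hu
          have h1 : f (x / u) * chi u ≤ 1 * chi u :=
            mul_le_mul_of_nonneg_right (hle _) (chi_nonneg _)
          rw [one_mul] at h1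
          exact div_le_div_of_nonneg_right h1 hu0.le
    _ = 1 := integral_chi_div

lemma chiPow_zero : ∀ n, ∀ t, t < 1 → chiPow n t = 0
  | 0 => fun _ ht => chi_eq_zero_of_lt (ht.trans one_lt_e)
  | n + 1 => fun _ ht => mconv_zero (chiPow_zero n) ht

lemma measurable_chiPow : ∀ n, Measurable (chiPow n)
  | 0 => measurable_chi
  | n + 1 => measurable_mconv (measurable_chiPow n) (chiPow_zero n)

lemma chiPow_nonneg : ∀ n, ∀ t, 0 ≤ chiPow n t
  | 0 => chi_nonneg
  | n + 1 => fun t => mconv_nonneg (chiPow_zero n) (chiPow_nonneg n) t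

lemma chiPow_le_one : ∀ n, ∀ t, chiPow n t ≤ 1
  | 0 => chi_le_one
  | n + 1 => fun t => mconv_le_one (chiPow_zero n) (chiPow_nonneg n) (chiPow_le_one n) t

lemma exp_cpow (a : ℝ) (w : ℂ) :
    ((Real.exp a : ℝ) : ℂ) ^ w = Complex.exp ((a : ℂ) * w) := by
  rw [Complex.cpow_def_of_ne_zero (by exact_mod_cast (Real.exp_pos a).ne'),
    ← Complex.ofReal_log (Real.exp_pos a).le, Real.log_exp]

lemma mellin_chi {z : ℂ} (hz : z ≠ 0) :
    ∫ u in Ioi (1:ℝ), (chi u : ℂ) * (u : ℂ) ^ (-z - 1)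
      = (Complex.exp (-z) - Complex.exp (-2 * z)) / z := by
  have hee : Real.exp 1 ≤ Real.exp 2 := Real.exp_le_exp.mpr one_le_two
  have h1 : ∀ u : ℝ, (chi u : ℂ) * (u : ℂ) ^ (-z - 1)
      = (Icc (Real.exp 1) (Real.exp 2)).indicator (fun u : ℝ => (u : ℂ) ^ (-z - 1)) u := by
    intro u
    unfold chi
    by_cases h : u ∈ Icc (Real.exp 1) (Real.exp 2) <;> simp [h]
  simp only [h1]
  rw [setIntegral_indicator measurableSet_Icc,
    inter_eq_self_of_subset_right Icc_subset_Ioi, integral_Icc_eq_integral_Ioc,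
    ← intervalIntegral.integral_of_le hee,
    integral_cpow (Or.inr ⟨?_, ?_⟩)]
  · rw [show -z - 1 + 1 = -z from by ring, exp_cpow, exp_cpow,
      show ((1:ℝ):ℂ) * (-z) = -z from by push_cast; ring,
      show ((2:ℝ):ℂ) * (-z) = -2 * z from by push_cast; ring]
    rw [div_neg, ← neg_div, neg_sub]
  · intro h
    apply hz
    have h2 : -z - 1 + 1 = -1 + 1 := by rw [h]
    simpa using h2
  · rw [uIcc_of_le hee]
    intro h
    exact (Real.exp_pos 1).not_ge h.1

lemma mellin_mconv {z : ℂ} (hz : 0 < z.re) {f : ℝ → ℝ} (hm : Measurable f)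
    (h0 : ∀ t, t < 1 → f t = 0) (hnn : ∀ t, 0 ≤ f t) (hle : ∀ t, f t ≤ 1) :
    ∫ u in Ioi (1:ℝ), (mconv f chi u : ℂ) * (u : ℂ) ^ (-z - 1)
      = (∫ u in Ioi (1:ℝ), (chi u : ℂ) * (u : ℂ) ^ (-z - 1))
        * ∫ v in Ioi (1:ℝ), (f v : ℂ) * (v : ℂ) ^ (-z - 1) := by
  have step1 : ∫ x in Ioi (1:ℝ), (mconv f chi x : ℂ) * (x : ℂ) ^ (-z - 1)
      = ∫ x in Ioi (1:ℝ), ∫ u in Ioi (1:ℝ),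
          ((f (x / u) * chi u / u : ℝ) : ℂ) * (x : ℂ) ^ (-z - 1) := by
    apply setIntegral_congr_fun measurableSet_Ioi
    intro x hx
    show ((mconv f chi x : ℝ) : ℂ) * (x : ℂ) ^ (-z - 1)
      = ∫ u in Ioi (1:ℝ), ((f (x / u) * chi u / u : ℝ) : ℂ) * (x : ℂ) ^ (-z - 1)
    have hcast : ((∫ u in Ioi (1:ℝ), f (x / u) * chi u / u : ℝ) : ℂ)
        = ∫ u in Ioi (1:ℝ), ((f (x / u) * chi u / u : ℝ) : ℂ) :=
      (integral_ofReal (𝕜 := ℂ)).symm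
    rw [mconv_eq f h0 x, hcast, ← integral_mul_const]
  have hmeas : Measurable (fun p : ℝ × ℝ =>
      ((f (p.1 / p.2) * chi p.2 / p.2 : ℝ) : ℂ) * ((p.1 : ℝ) : ℂ) ^ (-z - 1)) := by
    apply Measurable.mul
    · apply Complex.measurable_ofReal.comp
      exact ((hm.comp (measurable_fst.div measurable_snd)).mul
        (measurable_chi.comp measurable_snd)).div measurable_snd
    · exact (Complex.measurable_ofReal.comp measurable_fst).pow measurable_const
  have hbound : Integrable (fun p : ℝ × ℝ => p.1 ^ (-z.re - 1) * (chi p.2 / p.2))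
      ((volume.restrict (Ioi (1:ℝ))).prod (volume.restrict (Ioi (1:ℝ)))) :=
    Integrable.mul_prod (integrableOn_Ioi_rpow_of_lt (by linarith) one_pos) integrableOn_chi_div
  have hae : ∀ᵐ p : ℝ × ℝ ∂((volume.restrict (Ioi (1:ℝ))).prod (volume.restrict (Ioi (1:ℝ)))),
      p.1 ∈ Ioi (1:ℝ) ∧ p.2 ∈ Ioi (1:ℝ) := by
    rw [Measure.prod_restrict]
    filter_upwards [ae_restrict_mem (measurableSet_Ioi.prod measurableSet_Ioi)] with p hp
    exact hp
  have hint : Integrable (Function.uncurry fun x u =>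
      ((f (x / u) * chi u / u : ℝ) : ℂ) * ((x : ℝ) : ℂ) ^ (-z - 1))
      ((volume.restrict (Ioi (1:ℝ))).prod (volume.restrict (Ioi (1:ℝ)))) := by
    refine hbound.mono' hmeas.aestronglyMeasurable ?_
    filter_upwards [hae] with p hp
    obtain ⟨hp1, hp2⟩ := hp
    have hx0 : (0:ℝ) < p.1 := lt_trans one_pos hp1
    have hu0 : (0:ℝ) < p.2 := lt_trans one_pos hp2
    show ‖((f (p.1 / p.2) * chi p.2 / p.2 : ℝ) : ℂ) * ((p.1 : ℝ) : ℂ) ^ (-z - 1)‖ ≤ _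
    rw [norm_mul, Complex.norm_real, Real.norm_eq_abs,
      Complex.norm_cpow_eq_rpow_re_of_pos hx0,
      show (-z - 1).re = -z.re - 1 from by simp]
    rw [mul_comm]
    apply mul_le_mul_of_nonneg_left ?_ (Real.rpow_nonneg hx0.le _)
    rw [_root_.abs_of_nonneg (div_nonneg (mul_nonneg (hnn _) (chi_nonneg _)) hu0.le)]
    have h1 : f (p.1 / p.2) * chi p.2 ≤ 1 * chi p.2 :=
      mul_le_mul_of_nonneg_right (hle _) (chi_nonneg _)
    rw [one_mul] at h1
    exact div_le_div_of_nonneg_right h1 hu0.le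
  have swap := integral_integral_swap hint
  have inner : ∀ u ∈ Ioi (1:ℝ),
      (∫ x in Ioi (1:ℝ), ((f (x / u) * chi u / u : ℝ) : ℂ) * (x : ℂ) ^ (-z - 1))
        = ((chi u : ℂ) * (u : ℂ) ^ (-z - 1))
            * ∫ v in Ioi (1:ℝ), (f v : ℂ) * (v : ℂ) ^ (-z - 1) := by
    intro u hu
    have hu1 : (1:ℝ) < u := hu
    have hu0 : (0:ℝ) < u := lt_trans one_pos hu1
    have huC : ((u:ℝ):ℂ) ≠ 0 := by exact_mod_cast hu0.ne'
    have e1 : (∫ x in Ioi (1:ℝ), ((f (x / u) * chi u / u : ℝ) : ℂ) * (x : ℂ) ^ (-z - 1))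
        = ((chi u : ℂ) / (u : ℂ))
            * ∫ x in Ioi (1:ℝ), (f (x / u) : ℂ) * (x : ℂ) ^ (-z - 1) := by
      rw [← integral_const_mul]
      apply setIntegral_congr_fun measurableSet_Ioi
      intro x hx
      push_cast
      ring
    have e2 : (∫ x in Ioi (1:ℝ), (f (x / u) : ℂ) * (x : ℂ) ^ (-z - 1))
        = ∫ x in Ioi u, (f (x / u) : ℂ) * (x : ℂ) ^ (-z - 1) := by
      rw [show (∫ x in Ioi u, (f (x / u) : ℂ) * (x : ℂ) ^ (-z - 1))
          = ∫ x in Ici u, (f (x / u) : ℂ) * (x : ℂ) ^ (-z - 1) from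
          (integral_Ici_eq_integral_Ioi).symm,
        ← integral_indicator measurableSet_Ioi, ← integral_indicator measurableSet_Ici]
      congr 1
      funext x
      by_cases h1 : x ∈ Ici u
      · rw [indicator_of_mem h1, indicator_of_mem (mem_Ioi.mpr (lt_of_lt_of_le hu1 h1))]
      · rw [indicator_of_notMem h1]
        by_cases h2 : x ∈ Ioi (1:ℝ)
        · rw [indicator_of_mem h2]
          have hxu : x < u := not_le.mp h1
          have : x / u < 1 := (div_lt_one hu0).mpr hxu
          rw [h0 _ this, Complex.ofReal_zero, zero_mul]
        · rw [indicator_of_notMem h2]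
    have e3 : (∫ x in Ioi u, (f (x / u) : ℂ) * (x : ℂ) ^ (-z - 1))
        = u • ∫ v in Ioi (1:ℝ), (f v : ℂ) * (((u * v : ℝ)) : ℂ) ^ (-z - 1) := by
      have h := integral_comp_mul_left_Ioi
        (g := fun x : ℝ => (f (x / u) : ℂ) * ((x : ℝ) : ℂ) ^ (-z - 1)) 1 hu0
      rw [mul_one] at h
      have h3 : ∫ v in Ioi (1:ℝ), (f (u * v / u) : ℂ) * (((u * v : ℝ)) : ℂ) ^ (-z - 1)
          = u⁻¹ • ∫ x in Ioi u, (f (x / u) : ℂ) * ((x : ℝ) : ℂ) ^ (-z - 1) := h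
      have h2 : ∀ v ∈ Ioi (1:ℝ),
          (f (u * v / u) : ℂ) * (((u * v : ℝ)) : ℂ) ^ (-z - 1)
            = (f v : ℂ) * (((u * v : ℝ)) : ℂ) ^ (-z - 1) := by
        intro v hv
        rw [mul_div_cancel_left₀ _ hu0.ne']
      rw [setIntegral_congr_fun measurableSet_Ioi h2] at h3
      rw [h3, smul_smul, mul_inv_cancel₀ hu0.ne', one_smul]
    have e4 : (∫ v in Ioi (1:ℝ), (f v : ℂ) * (((u * v : ℝ)) : ℂ) ^ (-z - 1))
        = (u : ℂ) ^ (-z - 1) * ∫ v in Ioi (1:ℝ), (f v : ℂ) * (v : ℂ) ^ (-z - 1) := by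
      rw [← integral_const_mul]
      apply setIntegral_congr_fun measurableSet_Ioi
      intro v hv
      have hv0 : (0:ℝ) < v := lt_trans one_pos hv
      show (f v : ℂ) * (((u * v : ℝ)) : ℂ) ^ (-z - 1)
        = (u : ℂ) ^ (-z - 1) * ((f v : ℂ) * (v : ℂ) ^ (-z - 1))
      rw [Complex.ofReal_mul, mul_cpow_ofReal_nonneg hu0.le hv0.le]
      ring
    rw [e1, e2, e3, e4, Complex.real_smul]
    field_simp
  rw [step1, swap, setIntegral_congr_fun measurableSet_Ioi inner, integral_mul_const]

lemma mellin_chiPow {z : ℂ} (hz : 0 < z.re) (n : ℕ) :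
    ∫ u in Ioi (1:ℝ), (chiPow n u : ℂ) * (u : ℂ) ^ (-z - 1)
      = ((Complex.exp (-z) - Complex.exp (-2 * z)) / z) ^ (n + 1) := by
  have hz0 : z ≠ 0 := by
    intro h
    rw [h] at hz
    simp at hz
  induction n with
  | zero =>
    rw [show chiPow 0 = chi from rfl, mellin_chi hz0, pow_one]
  | succ n ih =>
    rw [show chiPow (n + 1) = mconv (chiPow n) chi from rfl,
      mellin_mconv hz (measurable_chiPow n) (chiPow_zero n) (chiPow_nonneg n) (chiPow_le_one n),
      mellin_chi hz0, ih]
    ring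

lemma norm_integrand {z : ℂ} (n : ℕ) {u : ℝ} (hu : u ∈ Ioi (1:ℝ)) :
    ‖(chiPow n u : ℂ) * (u : ℂ) ^ (-z - 1)‖ = chiPow n u * u ^ (-z.re - 1) := by
  have hu0 : (0:ℝ) < u := lt_trans one_pos hu
  rw [norm_mul, Complex.norm_real, Real.norm_eq_abs,
    Complex.norm_cpow_eq_rpow_re_of_pos hu0, show (-z - 1).re = -z.re - 1 from by simp,
    _root_.abs_of_nonneg (chiPow_nonneg n u)]

lemma integrable_mell {z : ℂ} (hz : 0 < z.re) (n : ℕ) :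
    IntegrableOn (fun u : ℝ => (chiPow n u : ℂ) * (u : ℂ) ^ (-z - 1)) (Ioi 1) := by
  apply Integrable.mono' (g := fun u : ℝ => u ^ (-z.re - 1))
    (integrableOn_Ioi_rpow_of_lt (by linarith) one_pos)
  · exact ((Complex.measurable_ofReal.comp (measurable_chiPow n)).mul
      (Complex.measurable_ofReal.pow measurable_const)).aestronglyMeasurable
  · filter_upwards [ae_restrict_mem measurableSet_Ioi] with u hu
    rw [norm_integrand n hu]
    have hu0 : (0:ℝ) < u := lt_trans one_pos hu
    calc chiPow n u * u ^ (-z.re - 1) ≤ 1 * u ^ (-z.re - 1) :=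
          mul_le_mul_of_nonneg_right (chiPow_le_one n u) (Real.rpow_nonneg hu0.le _)
      _ = u ^ (-z.re - 1) := one_mul _

lemma real_mellin_chiPow {x₀ : ℝ} (hx : 0 < x₀) (n : ℕ) :
    ∫ u in Ioi (1:ℝ), chiPow n u * u ^ (-x₀ - 1)
      = ((Real.exp (-x₀) - Real.exp (-2 * x₀)) / x₀) ^ (n + 1) := by
  have hz : (0:ℝ) < ((x₀ : ℂ)).re := by simpa using hx
  have hc := mellin_chiPow (z := (x₀ : ℂ)) hz n
  have hcong : ∀ u ∈ Ioi (1:ℝ), (chiPow n u : ℂ) * (u : ℂ) ^ (-(x₀:ℂ) - 1)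
      = ((chiPow n u * u ^ (-x₀ - 1) : ℝ) : ℂ) := by
    intro u hu
    have hu0 : (0:ℝ) ≤ u := (lt_trans one_pos hu).le
    rw [Complex.ofReal_mul, Complex.ofReal_cpow hu0]
    push_cast
    ring
  rw [setIntegral_congr_fun measurableSet_Ioi hcong] at hc
  have hcast : (∫ u in Ioi (1:ℝ), ((chiPow n u * u ^ (-x₀ - 1) : ℝ) : ℂ))
      = ((∫ u in Ioi (1:ℝ), chiPow n u * u ^ (-x₀ - 1) : ℝ) : ℂ) :=
    integral_ofReal (𝕜 := ℂ)
  rw [hcast] at hc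
  have hF : ((Complex.exp (-(x₀:ℂ)) - Complex.exp (-2 * (x₀:ℂ))) / (x₀:ℂ))
      = (((Real.exp (-x₀) - Real.exp (-2 * x₀)) / x₀ : ℝ) : ℂ) := by
    push_cast
    ring
  rw [hF] at hc
  exact_mod_cast hc

end LogGAux

/-- For `Re z > 0`, `log G(z) = -∫₁^∞ g(u) u^{-z-1} du`, where
`G(z) = 1 - (e^{-z} - e^{-2z})/z`. -/
theorem log_G_repr (z : ℂ) (hz : 0 < z.re) :
    Complex.log (1 - (Complex.exp (-z) - Complex.exp (-2 * z)) / z)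
      = -∫ u in Set.Ioi (1:ℝ), (g u : ℂ) * (u : ℂ) ^ (-z - 1) := by
  have hz0 : z ≠ 0 := fun h => by simp [h] at hz
  set F := (Complex.exp (-z) - Complex.exp (-2 * z)) / z with hFdef
  set R := (Real.exp (-z.re) - Real.exp (-2 * z.re)) / z.re with hRdef
  have hR0 : 0 ≤ R :=
    div_nonneg (sub_nonneg.mpr (Real.exp_le_exp.mpr (by linarith))) hz.le
  have hR1 : R < 1 := by
    have hexp : Real.exp (-2 * z.re) = Real.exp (-z.re) * Real.exp (-z.re) := by
      rw [← Real.exp_add]; ring_nf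
    have h2 : 1 - Real.exp (-z.re) ≤ z.re := by nlinarith [Real.add_one_le_exp (-z.re)]
    have hle : R ≤ Real.exp (-z.re) := by
      rw [hRdef, div_le_iff₀ hz, hexp]
      nlinarith [Real.exp_pos (-z.re)]
    calc R ≤ Real.exp (-z.re) := hle
      _ < 1 := by
          rw [← Real.exp_zero]
          exact Real.exp_lt_exp.mpr (by linarith)
  have hRn : ∀ n : ℕ, ∫ u in Set.Ioi (1:ℝ), chiPow n u * u ^ (-z.re - 1) = R ^ (n + 1) :=
    fun n => LogGAux.real_mellin_chiPow hz n
  have hFle : ‖F‖ ≤ R := by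
    rw [hFdef, ← LogGAux.mellin_chi hz0]
    refine le_trans (norm_integral_le_integral_norm _) ?_
    have hn : ∀ u ∈ Set.Ioi (1:ℝ), ‖(chi u : ℂ) * (u : ℂ) ^ (-z - 1)‖
        = chiPow 0 u * u ^ (-z.re - 1) := fun u hu => LogGAux.norm_integrand 0 hu
    rw [MeasureTheory.setIntegral_congr_fun measurableSet_Ioi hn, hRn 0, pow_one]
  have hF1 : ‖F‖ < 1 := lt_of_le_of_lt hFle hR1
  have hsum := Complex.hasSum_taylorSeries_neg_log hF1
  have hsum' : HasSum (fun n : ℕ => F ^ (n + 1) / ((n : ℂ) + 1)) (-Complex.log (1 - F)) := by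
    have h := (hasSum_nat_add_iff' 1).mpr hsum
    simp only [Finset.range_one, Finset.sum_singleton, pow_zero, Nat.cast_zero, div_zero,
      sub_zero, Nat.cast_add, Nat.cast_one] at h
    exact h
  have hTeq : ∀ n : ℕ, (fun u : ℝ => ((chiPow n u / (n + 1) : ℝ) : ℂ) * (u : ℂ) ^ (-z - 1))
      = fun u : ℝ => ((chiPow n u : ℂ) * (u : ℂ) ^ (-z - 1)) / ((n : ℂ) + 1) := by
    intro n
    funext u
    push_cast
    ring
  have hInt : ∀ n : ℕ, MeasureTheory.Integrable
      (fun u : ℝ => ((chiPow n u / (n + 1) : ℝ) : ℂ) * (u : ℂ) ^ (-z - 1))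
      (MeasureTheory.volume.restrict (Set.Ioi (1:ℝ))) := by
    intro n
    rw [hTeq n]
    exact (LogGAux.integrable_mell hz n).div_const _
  have hnormT : ∀ n : ℕ, ∀ u ∈ Set.Ioi (1:ℝ),
      ‖((chiPow n u / (n + 1) : ℝ) : ℂ) * (u : ℂ) ^ (-z - 1)‖
        = (chiPow n u * u ^ (-z.re - 1)) / ((n : ℝ) + 1) := by
    intro n u hu
    rw [congrFun (hTeq n) u, norm_div, LogGAux.norm_integrand n hu,
      show ((n : ℂ) + 1) = (((n : ℝ) + 1 : ℝ) : ℂ) from by push_cast; ring,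
      Complex.norm_real, Real.norm_of_nonneg (by positivity)]
  have hIntNorm : ∀ n : ℕ,
      ∫ u in Set.Ioi (1:ℝ), ‖((chiPow n u / (n + 1) : ℝ) : ℂ) * (u : ℂ) ^ (-z - 1)‖
        = R ^ (n + 1) / ((n : ℝ) + 1) := by
    intro n
    rw [MeasureTheory.setIntegral_congr_fun measurableSet_Ioi (hnormT n),
      MeasureTheory.integral_div, hRn n]
  have hsumm : Summable (fun n : ℕ => R ^ (n + 1) / ((n : ℝ) + 1)) := by
    apply Summable.of_nonneg_of_le (fun n => by positivity) (fun n => ?_)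
      ((summable_geometric_of_lt_one hR0 hR1).mul_left R)
    calc R ^ (n + 1) / ((n : ℝ) + 1) ≤ R ^ (n + 1) :=
          div_le_self (pow_nonneg hR0 _) (by push_cast; linarith [Nat.cast_nonneg (α := ℝ) n])
      _ = R * R ^ n := by rw [pow_succ, mul_comm]
  have hlintSum : (∑' n : ℕ, ∫⁻ u in Set.Ioi (1:ℝ),
      ‖((chiPow n u / (n + 1) : ℝ) : ℂ) * (u : ℂ) ^ (-z - 1)‖₊) ≠ ⊤ := by
    have hlint : ∀ n : ℕ, (∫⁻ u in Set.Ioi (1:ℝ),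
        ‖((chiPow n u / (n + 1) : ℝ) : ℂ) * (u : ℂ) ^ (-z - 1)‖₊)
          = ENNReal.ofReal (R ^ (n + 1) / ((n : ℝ) + 1)) := by
      intro n
      rw [← hIntNorm n]
      exact (MeasureTheory.ofReal_integral_norm_eq_lintegral_enorm (hInt n)).symm
    simp only [hlint]
    rw [← ENNReal.ofReal_tsum_of_nonneg (fun n => by positivity) hsumm]
    exact ENNReal.ofReal_ne_top
  have key : (∫ u in Set.Ioi (1:ℝ), (g u : ℂ) * (u : ℂ) ^ (-z - 1))
      = ∑' n : ℕ, F ^ (n + 1) / ((n : ℂ) + 1) := by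
    have hrw : ∀ u ∈ Set.Ioi (1:ℝ), (g u : ℂ) * (u : ℂ) ^ (-z - 1)
        = ∑' n : ℕ, ((chiPow n u / (n + 1) : ℝ) : ℂ) * (u : ℂ) ^ (-z - 1) := by
      intro u hu
      show ((∑' n : ℕ, chiPow n u / (n + 1) : ℝ) : ℂ) * (u : ℂ) ^ (-z - 1) = _
      rw [Complex.ofReal_tsum, ← tsum_mul_right]
    rw [MeasureTheory.setIntegral_congr_fun measurableSet_Ioi hrw,
      MeasureTheory.integral_tsum (fun n => (hInt n).aestronglyMeasurable) hlintSum]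
    apply tsum_congr
    intro n
    rw [hTeq n, MeasureTheory.integral_div, LogGAux.mellin_chiPow hz n]
  rw [key, hsum'.tsum_eq, neg_neg]
end

section
/- The function g(u) = ∑_{n=1}^∞ (1/n) χ^{*n}(u), with χ the indicator of [e, e²], is nonnegative, vanishes on [1, e), and on each interval (e^m, e^{m+1}) (m ≥ 1 an integer) agrees with a polynomial in log u of degree at most m - 1. -/
open Complex

open Polynomial MeasureTheory intervalIntegral

noncomputable def antideriv (p : Polynomial ℝ) : Polynomial ℝ :=
  p.sum fun i a => Polynomial.C (a / (i + 1)) * Polynomial.X ^ (i + 1)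

lemma derivative_antideriv (p : Polynomial ℝ) : (antideriv p).derivative = p := by
  unfold antideriv Polynomial.sum
  rw [map_sum]
  conv_rhs => rw [← Polynomial.sum_C_mul_X_pow_eq p]
  unfold Polynomial.sum
  apply Finset.sum_congr rfl
  intro i hi
  rw [Polynomial.derivative_C_mul, Polynomial.derivative_X_pow]
  rw [← mul_assoc]
  congr 1
  rw [← Polynomial.C_mul]
  congr 1
  push_cast
  field_simp

lemma natDegree_antideriv_le (p : Polynomial ℝ) : (antideriv p).natDegree ≤ p.natDegree + 1 := by
  unfold antideriv Polynomial.sum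
  apply Polynomial.natDegree_sum_le_of_forall_le
  intro i hi
  calc (Polynomial.C (p.coeff i / (i+1)) * Polynomial.X ^ (i+1)).natDegree
      ≤ i + 1 := by
        apply le_trans (Polynomial.natDegree_C_mul_le _ _)
        simp
    _ ≤ p.natDegree + 1 := by
        have := Polynomial.le_natDegree_of_mem_supp i hi
        omega

lemma contOn_polylog (p : Polynomial ℝ) (L : ℝ) {s : Set ℝ} (hs : ∀ u ∈ s, (0:ℝ) < u) :
    ContinuousOn (fun u => p.eval (L - Real.log u) / u) s := by
  apply ContinuousOn.div
  · exact (Polynomial.continuous p).comp_continuousOn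
      (continuousOn_const.sub (Real.continuousOn_log.mono (fun u hu => (hs u hu).ne')))
  · exact continuousOn_id
  · exact fun u hu => (hs u hu).ne'

lemma poly_int (p : Polynomial ℝ) (L : ℝ) {a b : ℝ} (ha : 0 < a) (hb : 0 < b) :
    ∫ u in a..b, p.eval (L - Real.log u) / u
      = (antideriv p).eval (L - Real.log a) - (antideriv p).eval (L - Real.log b) := by
  have key : ∫ u in a..b, p.eval (L - Real.log u) / u
      = (fun u => -(antideriv p).eval (L - Real.log u)) b
        - (fun u => -(antideriv p).eval (L - Real.log u)) a := by
    apply intervalIntegral.integral_eq_sub_of_hasDerivAt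
    · intro u hu
      have hu0 : (0:ℝ) < u := lt_of_lt_of_le (lt_min ha hb) (Set.mem_uIcc.mp hu |>.elim
        (fun h => le_trans (min_le_left _ _) h.1) (fun h => le_trans (min_le_right _ _) h.1))
      have h2 : HasDerivAt (fun u : ℝ => L - Real.log u) (-u⁻¹) u :=
        (Real.hasDerivAt_log hu0.ne').const_sub L
      have h3 : HasDerivAt (fun y => (antideriv p).eval y)
          ((antideriv p).derivative.eval (L - Real.log u)) (L - Real.log u) :=
        Polynomial.hasDerivAt _ _
      have := (h3.comp u h2).neg
      convert this using 1
      · funext y; simp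
      rw [derivative_antideriv]
      field_simp
    · apply ContinuousOn.intervalIntegrable
      apply contOn_polylog
      intro u hu
      exact lt_of_lt_of_le (lt_min ha hb) (Set.mem_uIcc.mp hu |>.elim
        (fun h => le_trans (min_le_left _ _) h.1) (fun h => le_trans (min_le_right _ _) h.1))
  rw [key]; ring
lemma chi_nonneg (u : ℝ) : 0 ≤ chi u := Set.indicator_nonneg (fun _ _ => zero_le_one) u

lemma one_lt_exp_one : (1:ℝ) < Real.exp 1 := by
  linarith [Real.add_one_le_exp 1]

lemma chiPow_key (n : ℕ) :
    (∀ u : ℝ, 0 ≤ chiPow n u) ∧ (∀ u : ℝ, u < Real.exp (n + 1) → chiPow n u = 0) ∧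
    (∀ m : ℕ, ∃ p : Polynomial ℝ, p.natDegree ≤ n ∧
      ∀ u ∈ Set.Ioo (Real.exp m) (Real.exp (m + 1)), chiPow n u = p.eval (Real.log u)) := by
  induction n with
  | zero =>
    refine ⟨?_, ?_, ?_⟩
    · exact fun u => chi_nonneg u
    · intro u hu
      show chi u = 0
      unfold chi
      apply Set.indicator_of_notMem
      intro hmem
      norm_num at hu
      linarith [hmem.1]
    · intro m
      by_cases hm : m = 1
      · subst hm
        refine ⟨Polynomial.C 1, by simp, ?_⟩
        intro u hu
        obtain ⟨hul, hur⟩ := hu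
        norm_num at hul hur
        show chi u = _
        unfold chi
        rw [Set.indicator_of_mem (Set.mem_Icc.mpr ⟨hul.le, hur.le⟩)]
        simp
      · refine ⟨0, by simp, ?_⟩
        intro u hu
        obtain ⟨hul, hur⟩ := hu
        show chi u = _
        unfold chi
        rw [Set.indicator_of_notMem, Polynomial.eval_zero]
        intro hmem
        rcases Nat.lt_or_ge m 1 with h1 | h1
        · have hm0 : m = 0 := by omega
          subst hm0
          norm_num at hur
          linarith [hmem.1]
        · have h2 : 2 ≤ m := by omega
          have : Real.exp 2 ≤ Real.exp m := Real.exp_le_exp.mpr (by exact_mod_cast h2)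
          linarith [hmem.2]
  | succ n ih =>
    obtain ⟨ihA, ihB, ihC⟩ := ih
    have hB : ∀ x : ℝ, x < Real.exp (↑(n+1) + 1) → chiPow (n+1) x = 0 := by
      intro x hx
      show mconv (chiPow n) chi x = 0
      unfold mconv
      have hz : Set.EqOn (fun u => chiPow n (x/u) * chi u / u) 0 (Set.uIcc 1 x) := by
        intro u _
        show chiPow n (x / u) * chi u / u = 0
        by_cases hmem : u ∈ Set.Icc (Real.exp 1) (Real.exp 2)
        · have hu1 : Real.exp 1 ≤ u := hmem.1
          have hupos : (0:ℝ) < u := lt_of_lt_of_le (Real.exp_pos 1) hu1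
          have hxu : x / u < Real.exp (↑n + 1) := by
            rcases le_or_gt x 0 with h | h
            · exact lt_of_le_of_lt (div_nonpos_of_nonpos_of_nonneg h hupos.le) (Real.exp_pos _)
            · rw [div_lt_iff₀ hupos]
              calc x < Real.exp (↑(n+1) + 1) := hx
                _ = Real.exp (↑n + 1) * Real.exp 1 := by rw [← Real.exp_add]; push_cast; ring_nf
                _ ≤ Real.exp (↑n + 1) * u := by
                    exact mul_le_mul_of_nonneg_left hu1 (Real.exp_pos _).le
          rw [ihB _ hxu, zero_mul, zero_div]
        · simp [chi, Set.indicator_of_notMem hmem]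
      rw [intervalIntegral.integral_congr hz]
      simp
    have hA : ∀ x : ℝ, 0 ≤ chiPow (n+1) x := by
      intro x
      rcases lt_or_ge x 1 with h | h
      · rw [hB x (lt_of_lt_of_le h (Real.one_le_exp (by positivity)))]
      · show 0 ≤ mconv (chiPow n) chi x
        unfold mconv
        apply intervalIntegral.integral_nonneg h
        intro u hu
        have hupos : (0:ℝ) < u := lt_of_lt_of_le one_pos hu.1
        exact div_nonneg (mul_nonneg (ihA _) (chi_nonneg _)) hupos.le
    refine ⟨hA, hB, ?_⟩
    intro m
    by_cases hm : m < 2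
    · refine ⟨0, by simp, ?_⟩
      intro u hu
      rw [Polynomial.eval_zero]
      apply hB
      calc u < Real.exp (↑m + 1) := hu.2
        _ ≤ Real.exp (↑(n+1) + 1) := by
            apply Real.exp_le_exp.mpr
            have : (m:ℝ) ≤ 1 := by exact_mod_cast Nat.lt_succ_iff.mp hm
            push_cast
            linarith
    · push_neg at hm
      obtain ⟨p₁, hp₁d, hp₁⟩ := ihC (m-1)
      obtain ⟨p₂, hp₂d, hp₂⟩ := ihC (m-2)
      have hc1 : ((m-1 : ℕ) : ℝ) = (m:ℝ) - 1 := by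
        push_cast [Nat.cast_sub (by omega : 1 ≤ m)]; ring
      have hc2 : ((m-2 : ℕ) : ℝ) = (m:ℝ) - 2 := by
        push_cast [Nat.cast_sub hm]; ring
      have hp₁' : ∀ v : ℝ, Real.exp ((m:ℝ)-1) < v → v < Real.exp (m:ℝ) →
          chiPow n v = p₁.eval (Real.log v) := by
        intro v h1 h2
        apply hp₁
        rw [hc1]
        constructor
        · exact h1
        · have : (m:ℝ) - 1 + 1 = (m:ℝ) := by ring
          rw [this]; exact h2
      have hp₂' : ∀ v : ℝ, Real.exp ((m:ℝ)-2) < v → v < Real.exp ((m:ℝ)-1) →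
          chiPow n v = p₂.eval (Real.log v) := by
        intro v h1 h2
        apply hp₂
        rw [hc2]
        constructor
        · exact h1
        · have : (m:ℝ) - 2 + 1 = (m:ℝ) - 1 := by ring
          rw [this]; exact h2
      set q : Polynomial ℝ := (antideriv p₁).comp (Polynomial.X - Polynomial.C 1)
          - (antideriv p₂).comp (Polynomial.X - Polynomial.C 2)
          + Polynomial.C ((antideriv p₂).eval ((m:ℝ)-1) - (antideriv p₁).eval ((m:ℝ)-1))
        with hq
      have hqd : q.natDegree ≤ n + 1 := by
        rw [hq]
        apply le_trans (Polynomial.natDegree_add_le _ _)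
        rw [Polynomial.natDegree_C]
        apply max_le _ (by omega)
        apply le_trans (Polynomial.natDegree_sub_le _ _)
        apply max_le
        · apply le_trans (Polynomial.natDegree_comp_le)
          have h1 : (Polynomial.X - Polynomial.C (1:ℝ)).natDegree = 1 :=
            Polynomial.natDegree_X_sub_C 1
          rw [h1, mul_one]
          exact le_trans (natDegree_antideriv_le p₁) (by omega)
        · apply le_trans (Polynomial.natDegree_comp_le)
          have h1 : (Polynomial.X - Polynomial.C (2:ℝ)).natDegree = 1 :=
            Polynomial.natDegree_X_sub_C 2
          rw [h1, mul_one]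
          exact le_trans (natDegree_antideriv_le p₂) (by omega)
      refine ⟨q, hqd, ?_⟩
      intro x hx
      obtain ⟨hx1, hx2⟩ := hx
      have hx0 : (0:ℝ) < x := lt_trans (Real.exp_pos _) hx1
      set L := Real.log x with hL
      have hL1 : (m:ℝ) < L := (Real.lt_log_iff_exp_lt hx0).mpr hx1
      have hL2 : L < (m:ℝ) + 1 := (Real.log_lt_iff_lt_exp hx0).mpr hx2
      have hm' : (2:ℝ) ≤ (m:ℝ) := by exact_mod_cast hm
      set u₀ := Real.exp (L - ((m:ℝ)-1)) with hu₀
      have hu₀pos : (0:ℝ) < u₀ := Real.exp_pos _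
      have hu₀e : Real.exp 1 < u₀ := Real.exp_lt_exp.mpr (by linarith)
      have hu₀e2 : u₀ < Real.exp 2 := Real.exp_lt_exp.mpr (by linarith)
      have hee2 : Real.exp 1 < Real.exp 2 := Real.exp_lt_exp.mpr one_lt_two
      have he2x : Real.exp 2 < x :=
        lt_of_le_of_lt (Real.exp_le_exp.mpr (by linarith)) hx1
      have h1x : (1:ℝ) ≤ x := le_of_lt (lt_trans (lt_trans one_lt_exp_one hee2) he2x)
      have hxu₀ : x / u₀ = Real.exp ((m:ℝ)-1) := by
        rw [hu₀]
        conv_lhs => rw [← Real.exp_log hx0, ← hL]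
        rw [← Real.exp_sub]
        ring_nf
      -- Step 1: express as a set integral of an indicator
      have step1 : chiPow (n+1) x = ∫ u in Set.Ioc (1:ℝ) x,
          Set.indicator (Set.Icc (Real.exp 1) (Real.exp 2)) (fun u => chiPow n (x/u) / u) u := by
        show mconv (chiPow n) chi x = _
        unfold mconv
        rw [intervalIntegral.integral_of_le h1x]
        congr 1
        funext u
        by_cases hmem : u ∈ Set.Icc (Real.exp 1) (Real.exp 2)
        · rw [Set.indicator_of_mem hmem]
          unfold chi
          rw [Set.indicator_of_mem hmem]
          simp [mul_comm]
        · rw [Set.indicator_of_notMem hmem]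
          unfold chi
          rw [Set.indicator_of_notMem hmem]
          simp
      have step2 : (∫ u in Set.Ioc (1:ℝ) x,
            Set.indicator (Set.Icc (Real.exp 1) (Real.exp 2)) (fun u => chiPow n (x/u) / u) u)
          = ∫ u in (Real.exp 1)..(Real.exp 2), chiPow n (x/u) / u := by
        rw [MeasureTheory.integral_indicator measurableSet_Icc,
          MeasureTheory.Measure.restrict_restrict measurableSet_Icc,
          Set.inter_eq_left.mpr
            (fun u hu => Set.mem_Ioc.mpr
              ⟨lt_of_lt_of_le one_lt_exp_one hu.1, le_trans hu.2 he2x.le⟩),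
          MeasureTheory.integral_Icc_eq_integral_Ioc,
          ← intervalIntegral.integral_of_le hee2.le]
      -- a.e. avoidance of the breakpoint u₀
      have hae : ∀ᵐ u : ℝ, u ≠ u₀ := by
        rw [MeasureTheory.ae_iff]
        have hs : {a : ℝ | ¬a ≠ u₀} = {u₀} := by
          ext a; simp
        rw [hs]
        exact Real.volume_singleton
      -- pointwise identification on the two pieces
      have heq1 : ∀ u ∈ Set.Ioc (Real.exp 1) u₀, u ≠ u₀ →
          chiPow n (x/u) / u = p₁.eval (L - Real.log u) / u := by
        intro u hu hne
        have hupos : (0:ℝ) < u := lt_trans (Real.exp_pos 1) hu.1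
        have h1 : Real.exp ((m:ℝ)-1) < x / u := by
          rw [← hxu₀]
          exact div_lt_div_of_pos_left hx0 hupos (lt_of_le_of_ne hu.2 hne)
        have h2 : x / u < Real.exp (m:ℝ) := by
          rw [div_lt_iff₀ hupos]
          calc x < Real.exp (↑m + 1) := hx2
            _ = Real.exp (m:ℝ) * Real.exp 1 := by rw [← Real.exp_add]
            _ ≤ Real.exp (m:ℝ) * u := mul_le_mul_of_nonneg_left hu.1.le (Real.exp_pos _).le
        rw [hp₁' (x/u) h1 h2, Real.log_div hx0.ne' hupos.ne', hL]
      have heq2 : ∀ u ∈ Set.Ioc u₀ (Real.exp 2),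
          chiPow n (x/u) / u = p₂.eval (L - Real.log u) / u := by
        intro u hu
        have hupos : (0:ℝ) < u := lt_trans hu₀pos hu.1
        have h1 : Real.exp ((m:ℝ)-2) < x / u := by
          have he : Real.exp ((m:ℝ)-2) = Real.exp (m:ℝ) / Real.exp 2 := by
            rw [← Real.exp_sub]
          rw [he, div_lt_div_iff₀ (Real.exp_pos 2) hupos]
          have h21 := hu.2
          nlinarith [Real.exp_pos (m:ℝ), Real.exp_pos (2:ℝ)]
        have h2 : x / u < Real.exp ((m:ℝ)-1) := by
          rw [← hxu₀]
          exact div_lt_div_of_pos_left hx0 hu₀pos hu.1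
        rw [hp₂' (x/u) h1 h2, Real.log_div hx0.ne' hupos.ne', hL]
      -- a.e. equalities on restricted measures
      have hae1 : (fun u => chiPow n (x/u) / u)
          =ᵐ[MeasureTheory.volume.restrict (Set.Ioc (Real.exp 1) u₀)]
          (fun u => p₁.eval (L - Real.log u) / u) := by
        filter_upwards [MeasureTheory.ae_restrict_mem measurableSet_Ioc,
          MeasureTheory.ae_restrict_of_ae hae] with u hu hne
        exact heq1 u hu hne
      have hae2 : (fun u => chiPow n (x/u) / u)
          =ᵐ[MeasureTheory.volume.restrict (Set.Ioc u₀ (Real.exp 2))]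
          (fun u => p₂.eval (L - Real.log u) / u) := by
        filter_upwards [MeasureTheory.ae_restrict_mem measurableSet_Ioc] with u hu
        exact heq2 u hu
      -- integrability of the two pieces
      have hcont1 : ContinuousOn (fun u => p₁.eval (L - Real.log u) / u)
          (Set.uIcc (Real.exp 1) u₀) := by
        apply contOn_polylog
        intro u hu
        rw [Set.uIcc_of_le hu₀e.le] at hu
        exact lt_of_lt_of_le (Real.exp_pos 1) hu.1
      have hcont2 : ContinuousOn (fun u => p₂.eval (L - Real.log u) / u)
          (Set.uIcc u₀ (Real.exp 2)) := by
        apply contOn_polylog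
        intro u hu
        rw [Set.uIcc_of_le hu₀e2.le] at hu
        exact lt_of_lt_of_le hu₀pos hu.1
      have hint1 : IntervalIntegrable (fun u => chiPow n (x/u) / u)
          MeasureTheory.volume (Real.exp 1) u₀ := by
        have h1g := hcont1.intervalIntegrable (μ := MeasureTheory.volume)
        rw [intervalIntegrable_iff_integrableOn_Ioc_of_le hu₀e.le] at h1g ⊢
        exact h1g.congr hae1.symm
      have hint2 : IntervalIntegrable (fun u => chiPow n (x/u) / u)
          MeasureTheory.volume u₀ (Real.exp 2) := by
        have h2g := hcont2.intervalIntegrable (μ := MeasureTheory.volume)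
        rw [intervalIntegrable_iff_integrableOn_Ioc_of_le hu₀e2.le] at h2g ⊢
        exact h2g.congr hae2.symm
      have split : ∫ u in (Real.exp 1)..(Real.exp 2), chiPow n (x/u) / u
          = (∫ u in (Real.exp 1)..u₀, chiPow n (x/u) / u)
            + ∫ u in u₀..(Real.exp 2), chiPow n (x/u) / u :=
        (intervalIntegral.integral_add_adjacent_intervals hint1 hint2).symm
      have piece1 : (∫ u in (Real.exp 1)..u₀, chiPow n (x/u) / u)
          = (antideriv p₁).eval (L - 1) - (antideriv p₁).eval ((m:ℝ)-1) := by
        rw [intervalIntegral.integral_of_le hu₀e.le, MeasureTheory.integral_congr_ae hae1,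
          ← intervalIntegral.integral_of_le hu₀e.le,
          poly_int p₁ L (Real.exp_pos 1) hu₀pos, Real.log_exp, Real.log_exp]
        ring_nf
      have piece2 : (∫ u in u₀..(Real.exp 2), chiPow n (x/u) / u)
          = (antideriv p₂).eval ((m:ℝ)-1) - (antideriv p₂).eval (L - 2) := by
        rw [intervalIntegral.integral_of_le hu₀e2.le, MeasureTheory.integral_congr_ae hae2,
          ← intervalIntegral.integral_of_le hu₀e2.le,
          poly_int p₂ L hu₀pos (Real.exp_pos 2), Real.log_exp, Real.log_exp]
        ring_nf
      rw [step1, step2, split, piece1, piece2, hq]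
      simp [Polynomial.eval_comp]
      ring


/-- `g` is nonnegative, vanishes on `[1, e)`, and on each interval `(e^m, e^{m+1})`
agrees with a polynomial in `log u` of degree at most `m - 1`. -/
theorem g_structure :
    (∀ u : ℝ, 0 ≤ g u) ∧
    (∀ u ∈ Set.Ico (1:ℝ) (Real.exp 1), g u = 0) ∧
    (∀ m : ℕ, 1 ≤ m → ∃ p : Polynomial ℝ, p.natDegree ≤ m - 1 ∧
      ∀ u ∈ Set.Ioo (Real.exp m) (Real.exp (m + 1)), g u = p.eval (Real.log u)) := by
  refine ⟨?_, ?_, ?_⟩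
  · intro u
    apply tsum_nonneg
    intro n
    apply div_nonneg ((chiPow_key n).1 u)
    positivity
  · intro u hu
    show (∑' n : ℕ, chiPow n u / (n + 1)) = 0
    have hz : ∀ n : ℕ, chiPow n u / (n + 1) = 0 := by
      intro n
      rw [(chiPow_key n).2.1 u ?_, zero_div]
      calc u < Real.exp 1 := hu.2
        _ ≤ Real.exp (↑n + 1) := Real.exp_le_exp.mpr (by linarith [Nat.cast_nonneg (α := ℝ) n])
    rw [tsum_congr hz, tsum_zero]
  · intro m hm
    choose P hPd hPe using fun n => (chiPow_key n).2.2
    refine ⟨∑ n ∈ Finset.range m, Polynomial.C (((n:ℝ) + 1)⁻¹) * P n m, ?_, ?_⟩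
    · apply Polynomial.natDegree_sum_le_of_forall_le
      intro n hn
      apply le_trans (Polynomial.natDegree_C_mul_le _ _)
      exact le_trans (hPd n m) (by have := Finset.mem_range.mp hn; omega)
    · intro u hu
      show (∑' n : ℕ, chiPow n u / (n + 1)) = _
      rw [tsum_eq_sum (s := Finset.range m) ?_]
      · rw [Polynomial.eval_finset_sum]
        apply Finset.sum_congr rfl
        intro n hn
        rw [hPe n m u hu, Polynomial.eval_mul, Polynomial.eval_C, div_eq_mul_inv]
        ring
      · intro n hn
        rw [(chiPow_key n).2.1 u ?_, zero_div]
        calc u < Real.exp (↑m + 1) := hu.2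
          _ ≤ Real.exp (↑n + 1) := by
              apply Real.exp_le_exp.mpr
              have : m ≤ n := by simpa using hn
              have : (m:ℝ) ≤ (n:ℝ) := by exact_mod_cast this
              linarith
end

section
/- Let β ∈ (0,1). If a Beurling system satisfies ψ(x) - x = Ω(x exp(-c''(log x)^{β/(β+1)})) with ψ(x) = ∫₁^x log u dΠ(u) and π(x) = ∫₁^x (1/log u) dψ(u) + O(√x), then π(x) - Li(x) = Ω(x exp(-c(log x)^{β/(β+1)})) for every c > c''. More precisely: if π(x) = Li(x) + O(x exp(-c(log x)^{β/(β+1)})) for some c > c'', then ψ(x) = x + O(x exp(-c'(log x)^{β/(β+1)})) for every c' < c, contradicting the Ω-bound. -/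
open Filter Asymptotics MeasureTheory Set

noncomputable section PiOmegaAux

private def fLi : ℝ → ℝ := fun u => (1 - u⁻¹) / Real.log u
private def Li : ℝ → ℝ := fun x => ∫ u in (1:ℝ)..x, fLi u
private def nuLi : Measure ℝ :=
  volume.withDensity fun u => (Ioi 1).indicator (fun v => ENNReal.ofReal (fLi v)) u

private lemma fLi_meas : Measurable fLi := by
  unfold fLi
  simp_rw [div_eq_mul_inv]
  exact (measurable_const.sub measurable_inv).mul Real.measurable_log.inv

private lemma one_sub_inv_le_log {u : ℝ} (hu : 0 < u) : 1 - u⁻¹ ≤ Real.log u := by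
  have h := Real.log_le_sub_one_of_pos (inv_pos.mpr hu)
  rw [Real.log_inv] at h
  linarith

private lemma fLi_nonneg {u : ℝ} (hu : 1 < u) : 0 ≤ fLi u := by
  apply div_nonneg _ (Real.log_pos hu).le
  have : u⁻¹ ≤ 1 := by
    rw [inv_le_one_iff₀]; right; exact hu.le
  linarith

private lemma fLi_le_one {u : ℝ} (hu : 1 < u) : fLi u ≤ 1 := by
  rw [fLi, div_le_one (Real.log_pos hu)]
  exact one_sub_inv_le_log (lt_trans one_pos hu)

private lemma fLi_intOn {a b : ℝ} (ha : 1 ≤ a) : IntegrableOn fLi (Ioc a b) volume := by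
  apply Integrable.mono' (integrableOn_const (C := (1:ℝ)) measure_Ioc_lt_top.ne)
  · exact fLi_meas.aestronglyMeasurable
  · filter_upwards [ae_restrict_mem measurableSet_Ioc] with u hu
    have h1 : 1 < u := lt_of_le_of_lt ha hu.1
    rw [Real.norm_eq_abs, abs_of_nonneg (fLi_nonneg h1)]
    exact fLi_le_one h1

private lemma log_eq_lint {u : ℝ} (hu : 1 ≤ u) :
    ENNReal.ofReal (Real.log u) = ∫⁻ t in Ico 1 u, ENNReal.ofReal t⁻¹ ∂volume := by
  have hint : IntegrableOn (fun t : ℝ => t⁻¹) (Ico 1 u) volume := by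
    apply (ContinuousOn.integrableOn_Icc ?_).mono_set Ico_subset_Icc_self
    exact ContinuousOn.inv₀ continuousOn_id fun t ht => by
      rcases ht with ⟨h1, _⟩; positivity
  rw [ofReal_integral_eq_lintegral_ofReal hint ?_ |>.symm]
  · congr 1
    rw [integral_Ico_eq_integral_Ioo, ← integral_Ioc_eq_integral_Ioo,
      ← intervalIntegral.integral_of_le hu,
      integral_inv_of_pos one_pos (lt_of_lt_of_le one_pos hu), div_one]
  · filter_upwards [ae_restrict_mem measurableSet_Ico] with t ht
    rcases ht with ⟨h1, _⟩
    positivity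

private lemma core (ν : Measure ℝ) [SFinite ν] {x : ℝ} (_hx : 1 ≤ x) :
    ∫⁻ u in Ioc 1 x, ENNReal.ofReal (Real.log u) ∂ν
      = ∫⁻ t in Ico 1 x, ENNReal.ofReal t⁻¹ * ν (Ioc t x) ∂volume := by
  have step1 : ∫⁻ u in Ioc 1 x, ENNReal.ofReal (Real.log u) ∂ν
      = ∫⁻ u in Ioc 1 x, ∫⁻ t in Ico 1 x,
          (if t < u then ENNReal.ofReal t⁻¹ else 0) ∂volume ∂ν := by
    apply setLIntegral_congr_fun measurableSet_Ioc
    intro u hu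
    have hind : ∀ t : ℝ, (if t < u then ENNReal.ofReal t⁻¹ else 0)
        = (Iio u).indicator (fun t => ENNReal.ofReal t⁻¹) t := by
      intro t; simp [Set.indicator_apply, mem_Iio]
    simp_rw [hind]
    rw [lintegral_indicator measurableSet_Iio, Measure.restrict_restrict measurableSet_Iio,
      log_eq_lint (le_of_lt hu.1)]
    congr 2
    ext t; constructor
    · rintro ⟨h1, h2⟩; exact ⟨h2, h1, lt_of_lt_of_le h2 hu.2⟩
    · rintro ⟨h2, h1, _⟩; exact ⟨h1, h2⟩
  rw [step1, lintegral_lintegral_swap]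
  · apply setLIntegral_congr_fun measurableSet_Ico
    intro t ht
    have hind : ∀ u : ℝ, (if t < u then ENNReal.ofReal t⁻¹ else 0)
        = (Ioi t).indicator (fun _ => ENNReal.ofReal t⁻¹) u := by
      intro u; simp [Set.indicator_apply, mem_Ioi]
    simp_rw [hind]
    rw [lintegral_indicator measurableSet_Ioi, Measure.restrict_restrict measurableSet_Ioi,
      setLIntegral_const]
    congr 1
    have : Ioi t ∩ Ioc 1 x = Ioc t x := by
      ext u; constructor
      · rintro ⟨h2, _, h3⟩; exact ⟨h2, h3⟩
      · rintro ⟨h2, h3⟩; exact ⟨h2, lt_of_le_of_lt ht.1 h2, h3⟩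
    rw [this]
  · apply Measurable.aemeasurable
    apply Measurable.ite (measurableSet_lt measurable_snd measurable_fst)
    · exact (measurable_snd.inv).ennreal_ofReal
    · exact measurable_const

private lemma conv_helper {μ : Measure ℝ} {s : Set ℝ} {g : ℝ → ℝ}
    (hg : AEMeasurable g (μ.restrict s)) (h0 : 0 ≤ᵐ[μ.restrict s] g)
    (hfin : ∫⁻ a in s, ENNReal.ofReal (g a) ∂μ ≠ ⊤) :
    IntegrableOn g s μ ∧ ∫ a in s, g a ∂μ = (∫⁻ a in s, ENNReal.ofReal (g a) ∂μ).toReal := by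
  constructor
  · exact ⟨hg.aestronglyMeasurable, (hasFiniteIntegral_iff_ofReal h0).mpr hfin.lt_top⟩
  · exact integral_eq_lintegral_of_nonneg_ae h0 hg.aestronglyMeasurable

private lemma Li_sub {t x : ℝ} (ht : 1 ≤ t) (htx : t ≤ x) :
    Li x - Li t = ∫ u in Ioc t x, fLi u := by
  have h1 : IntervalIntegrable fLi volume 1 t :=
    (intervalIntegrable_iff_integrableOn_Ioc_of_le ht).mpr (fLi_intOn le_rfl)
  have h2 : IntervalIntegrable fLi volume t x :=
    (intervalIntegrable_iff_integrableOn_Ioc_of_le htx).mpr (fLi_intOn ht)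
  have := intervalIntegral.integral_add_adjacent_intervals h1 h2
  rw [Li, Li, ← this, ← intervalIntegral.integral_of_le htx]
  ring

instance : SFinite nuLi := by unfold nuLi; infer_instance

private lemma nuLi_apply {t x : ℝ} (ht : 1 ≤ t) (htx : t ≤ x) :
    nuLi (Ioc t x) = ENNReal.ofReal (Li x - Li t) := by
  rw [nuLi, withDensity_apply _ measurableSet_Ioc, Li_sub ht htx,
    ofReal_integral_eq_lintegral_ofReal (fLi_intOn ht) ?_]
  · apply setLIntegral_congr_fun measurableSet_Ioc
    intro u hu
    rw [indicator_of_mem (mem_Ioi.mpr (lt_of_le_of_lt ht hu.1))]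
  · filter_upwards [ae_restrict_mem measurableSet_Ioc] with u hu
    exact fLi_nonneg (lt_of_le_of_lt ht hu.1)

private lemma nuLi_lt_top (t x : ℝ) : nuLi (Ioc t x) < ⊤ := by
  rw [nuLi, withDensity_apply _ measurableSet_Ioc]
  calc ∫⁻ u in Ioc t x, (Ioi 1).indicator (fun v => ENNReal.ofReal (fLi v)) u ∂volume
      ≤ ∫⁻ _ in Ioc t x, 1 ∂volume := by
        apply setLIntegral_mono' measurableSet_Ioc
        intro u _
        by_cases h : u ∈ Ioi (1:ℝ)
        · rw [indicator_of_mem h]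
          calc ENNReal.ofReal (fLi u) ≤ ENNReal.ofReal 1 := ENNReal.ofReal_le_ofReal (fLi_le_one h)
          _ = 1 := ENNReal.ofReal_one
        · rw [indicator_of_notMem h]; exact zero_le
    _ = volume (Ioc t x) := setLIntegral_one _
    _ < ⊤ := measure_Ioc_lt_top

private lemma Li_sub_nonneg {t x : ℝ} (ht : 1 ≤ t) (htx : t ≤ x) : 0 ≤ Li x - Li t := by
  rw [Li_sub ht htx]
  apply setIntegral_nonneg measurableSet_Ioc
  intro u hu; exact fLi_nonneg (lt_of_le_of_lt ht hu.1)

private lemma li_lhs {x : ℝ} (hx : 1 ≤ x) :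
    ∫⁻ u in Ioc 1 x, ENNReal.ofReal (Real.log u) ∂nuLi
      = ENNReal.ofReal (x - 1 - Real.log x) := by
  rw [nuLi, restrict_withDensity measurableSet_Ioc,
    lintegral_withDensity_eq_lintegral_mul _
      (fLi_meas.ennreal_ofReal.indicator measurableSet_Ioi) Real.measurable_log.ennreal_ofReal]
  have hint : IntegrableOn (fun u : ℝ => 1 - u⁻¹) (Ioc 1 x) volume := by
    apply ((ContinuousOn.integrableOn_Icc ?_)).mono_set Ioc_subset_Icc_self
    exact continuousOn_const.sub (ContinuousOn.inv₀ continuousOn_id fun t ht => by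
      rcases ht with ⟨h1, _⟩; positivity)
  have step : ∫⁻ u in Ioc 1 x,
      ((Ioi 1).indicator (fun v => ENNReal.ofReal (fLi v)) * fun u => ENNReal.ofReal (Real.log u)) u ∂volume
      = ∫⁻ u in Ioc 1 x, ENNReal.ofReal (1 - u⁻¹) ∂volume := by
    apply setLIntegral_congr_fun measurableSet_Ioc
    intro u hu
    simp only [Pi.mul_apply]
    rw [indicator_of_mem (mem_Ioi.mpr hu.1), ← ENNReal.ofReal_mul (fLi_nonneg hu.1)]
    congr 1
    rw [fLi, div_mul_cancel₀ _ (ne_of_gt (Real.log_pos hu.1))]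
  rw [step, ← ofReal_integral_eq_lintegral_ofReal hint ?_]
  · congr 1
    rw [← intervalIntegral.integral_of_le hx,
      intervalIntegral.integral_sub intervalIntegrable_const ?_,
      intervalIntegral.integral_const, integral_inv_of_pos one_pos (lt_of_lt_of_le one_pos hx)]
    · simp
    · exact intervalIntegral.intervalIntegrable_inv
        (fun t ht => by
          rcases (Set.uIcc_of_le hx ▸ ht) with ⟨h1, _⟩; positivity)
        (continuousOn_id)
  · filter_upwards [ae_restrict_mem measurableSet_Ioc] with u hu
    have : u⁻¹ ≤ 1 := by rw [inv_le_one_iff₀]; right; exact hu.1.le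
    simp only [Pi.zero_apply]
    linarith

private lemma ell_meas (x : ℝ) : Measurable (fun t => (nuLi (Ioc t x)).toReal) := by
  apply Antitone.measurable
  intro s t hst
  exact ENNReal.toReal_mono (nuLi_lt_top s x).ne (measure_mono (Ioc_subset_Ioc_left hst))

private lemma li_repr {x : ℝ} (hx : 1 ≤ x) :
    IntegrableOn (fun t => (Li x - Li t) / t) (Ico 1 x) volume ∧
    x - 1 - Real.log x = ∫ t in Ico 1 x, (Li x - Li t) / t ∂volume := by
  have hae : ∀ᵐ t ∂(volume.restrict (Ico 1 x)),
      (fun t => (nuLi (Ioc t x)).toReal / t) t = (Li x - Li t) / t := by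
    filter_upwards [ae_restrict_mem measurableSet_Ico] with t ht
    rw [nuLi_apply ht.1 ht.2.le, ENNReal.toReal_ofReal (Li_sub_nonneg ht.1 ht.2.le)]
  have hmeas : AEMeasurable (fun t => (Li x - Li t) / t) (volume.restrict (Ico 1 x)) :=
    (((ell_meas x).div measurable_id).aemeasurable).congr hae
  have h0 : 0 ≤ᵐ[volume.restrict (Ico 1 x)] fun t => (Li x - Li t) / t := by
    filter_upwards [ae_restrict_mem measurableSet_Ico] with t ht
    exact div_nonneg (Li_sub_nonneg ht.1 ht.2.le) (lt_of_lt_of_le one_pos ht.1).le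
  have hcong : ∫⁻ t in Ico 1 x, ENNReal.ofReal ((Li x - Li t) / t) ∂volume
      = ∫⁻ t in Ico 1 x, ENNReal.ofReal t⁻¹ * nuLi (Ioc t x) ∂volume := by
    apply setLIntegral_congr_fun measurableSet_Ico
    intro t ht
    dsimp only
    rw [nuLi_apply ht.1 ht.2.le, ← ENNReal.ofReal_mul (inv_nonneg.mpr (le_trans zero_le_one ht.1)), div_eq_mul_inv, mul_comm]
  have hfin : ∫⁻ t in Ico 1 x, ENNReal.ofReal ((Li x - Li t) / t) ∂volume ≠ ⊤ := by
    rw [hcong, ← core nuLi hx, li_lhs hx]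
    exact ENNReal.ofReal_ne_top
  obtain ⟨hint, heq⟩ := conv_helper hmeas h0 hfin
  refine ⟨hint, ?_⟩
  rw [heq, hcong, ← core nuLi hx, li_lhs hx,
    ENNReal.toReal_ofReal ?_]
  nlinarith [Real.log_le_sub_one_of_pos (lt_of_lt_of_le one_pos hx), Real.add_one_le_exp (Real.log x)]

private lemma psi_repr (P : StieltjesFunction ℝ) {x : ℝ} (hx : 1 ≤ x) :
    IntegrableOn (fun t => (P x - P t) / t) (Ico 1 x) volume ∧
    ∫ u in Ioc 1 x, Real.log u ∂P.measure = ∫ t in Ico 1 x, (P x - P t) / t ∂volume := by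
  have hLfin : ∫⁻ u in Ioc 1 x, ENNReal.ofReal (Real.log u) ∂P.measure ≠ ⊤ := by
    have hb : ∫⁻ u in Ioc 1 x, ENNReal.ofReal (Real.log u) ∂P.measure
        ≤ ENNReal.ofReal (Real.log x) * P.measure (Ioc 1 x) := by
      rw [← setLIntegral_const]
      apply setLIntegral_mono' measurableSet_Ioc
      intro u hu
      exact ENNReal.ofReal_le_ofReal (Real.log_le_log (lt_of_lt_of_le one_pos hu.1.le) hu.2)
    refine ne_top_of_le_ne_top ?_ hb
    rw [P.measure_Ioc]
    exact ENNReal.mul_ne_top ENNReal.ofReal_ne_top ENNReal.ofReal_ne_top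
  have hcong : ∫⁻ t in Ico 1 x, ENNReal.ofReal ((P x - P t) / t) ∂volume
      = ∫⁻ t in Ico 1 x, ENNReal.ofReal t⁻¹ * P.measure (Ioc t x) ∂volume := by
    apply setLIntegral_congr_fun measurableSet_Ico
    intro t ht
    dsimp only
    rw [P.measure_Ioc, ← ENNReal.ofReal_mul (inv_nonneg.mpr (le_trans zero_le_one ht.1)),
      div_eq_mul_inv, mul_comm]
  have hfinR : ∫⁻ t in Ico 1 x, ENNReal.ofReal ((P x - P t) / t) ∂volume ≠ ⊤ := by
    rw [hcong, ← core P.measure hx]; exact hLfin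
  have hmeasR : AEMeasurable (fun t => (P x - P t) / t) (volume.restrict (Ico 1 x)) :=
    ((measurable_const.sub P.mono.measurable).div measurable_id).aemeasurable
  have h0R : 0 ≤ᵐ[volume.restrict (Ico 1 x)] fun t => (P x - P t) / t := by
    filter_upwards [ae_restrict_mem measurableSet_Ico] with t ht
    exact div_nonneg (sub_nonneg.mpr (P.mono ht.2.le)) (lt_of_lt_of_le one_pos ht.1).le
  have h0L : 0 ≤ᵐ[P.measure.restrict (Ioc 1 x)] fun u => Real.log u := by
    filter_upwards [ae_restrict_mem measurableSet_Ioc] with u hu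
    exact Real.log_nonneg hu.1.le
  obtain ⟨hintR, heqR⟩ := conv_helper hmeasR h0R hfinR
  obtain ⟨_, heqL⟩ := conv_helper Real.measurable_log.aemeasurable h0L hLfin
  refine ⟨hintR, ?_⟩
  rw [heqL, heqR, hcong, ← core P.measure hx]

private lemma inv_repr {x : ℝ} (hx : 1 ≤ x) :
    IntegrableOn (fun t : ℝ => t⁻¹) (Ico 1 x) volume ∧
    ∫ t in Ico 1 x, t⁻¹ ∂volume = Real.log x := by
  have hint : IntegrableOn (fun t : ℝ => t⁻¹) (Ico 1 x) volume := by
    apply (ContinuousOn.integrableOn_Icc ?_).mono_set Ico_subset_Icc_self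
    exact ContinuousOn.inv₀ continuousOn_id fun t ht => by
      rcases ht with ⟨h1, _⟩; positivity
  refine ⟨hint, ?_⟩
  rw [integral_Ico_eq_integral_Ioo, ← integral_Ioc_eq_integral_Ioo,
    ← intervalIntegral.integral_of_le hx,
    integral_inv_of_pos one_pos (lt_of_lt_of_le one_pos hx), div_one]

private lemma key_identity (P : StieltjesFunction ℝ) {x : ℝ} (hx : 1 ≤ x) :
    IntegrableOn (fun t => (P t - Li t) / t) (Ico 1 x) volume ∧
    (∫ u in Ioc 1 x, Real.log u ∂P.measure) - x
      = (P x - Li x) * Real.log x - (∫ t in Ico 1 x, (P t - Li t) / t ∂volume)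
        - 1 - Real.log x := by
  obtain ⟨hintA, heqA⟩ := psi_repr P hx
  obtain ⟨hintB, heqB⟩ := li_repr hx
  obtain ⟨hintI, heqI⟩ := inv_repr hx
  have hfun : (fun t => (P t - Li t) / t)
      = fun t => (P x - Li x) * t⁻¹ - ((P x - P t) / t - (Li x - Li t) / t) := by
    funext t
    simp only [div_eq_mul_inv]
    ring
  have hAB : IntegrableOn (fun t => (P x - P t) / t - (Li x - Li t) / t) (Ico 1 x) volume :=
    hintA.sub hintB
  have hintD : IntegrableOn (fun t => (P t - Li t) / t) (Ico 1 x) volume := by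
    rw [hfun]
    exact (hintI.const_mul _).sub hAB
  refine ⟨hintD, ?_⟩
  have : ∫ t in Ico 1 x, (P t - Li t) / t ∂volume
      = (P x - Li x) * Real.log x - ((∫ t in Ico 1 x, (P x - P t) / t ∂volume)
          - ∫ t in Ico 1 x, (Li x - Li t) / t ∂volume) := by
    rw [hfun, integral_sub (hintI.const_mul _) hAB,
      integral_sub hintA hintB, MeasureTheory.integral_const_mul, heqI]
  rw [heqA, this, ← heqB]
  ring

private lemma asym1 {θ a : ℝ} (hθ : 0 < θ) (ha : 0 < a) :
    Tendsto (fun x : ℝ => Real.log x * Real.exp (-a * Real.log x ^ θ)) atTop (nhds 0) := by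
  have h := tendsto_rpow_mul_exp_neg_mul_atTop_nhds_zero (1/θ) a ha
  have hcomp : Tendsto (fun x : ℝ => Real.log x ^ θ) atTop atTop :=
    (tendsto_rpow_atTop hθ).comp Real.tendsto_log_atTop
  have h2 := h.comp hcomp
  apply h2.congr'
  filter_upwards [eventually_ge_atTop (1:ℝ)] with x hx
  have hL : 0 ≤ Real.log x := Real.log_nonneg hx
  simp only [Function.comp_apply]
  rw [← Real.rpow_mul hL, mul_one_div, div_self (ne_of_gt hθ), Real.rpow_one]

private lemma exp_neg_small {a θ : ℝ} (ha : 0 < a) (hθ : 0 < θ) :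
    Tendsto (fun x : ℝ => Real.exp (-a * Real.log x ^ θ)) atTop (nhds 0) := by
  apply Real.tendsto_exp_atBot.comp
  have hcomp : Tendsto (fun x : ℝ => Real.log x ^ θ) atTop atTop :=
    (tendsto_rpow_atTop hθ).comp Real.tendsto_log_atTop
  exact Tendsto.const_mul_atTop_of_neg (by linarith) hcomp

private lemma expL_le {θ c₀ η : ℝ} (hθ1 : θ < 1) (hc₀ : 0 < c₀) (hη : 0 < η) :
    ∀ᶠ x : ℝ in atTop, Real.exp (c₀ * Real.log x ^ θ) ≤ x ^ η := by
  have h1 : Tendsto (fun x : ℝ => Real.log x ^ (θ - 1)) atTop (nhds 0) := by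
    have h0 := (tendsto_rpow_neg_atTop (show (0:ℝ) < 1 - θ by linarith)).comp
      Real.tendsto_log_atTop
    apply h0.congr
    intro x
    simp only [Function.comp_apply]
    norm_num
  have h2 := h1.eventually (eventually_le_nhds (show (0:ℝ) < η / c₀ by positivity))
  filter_upwards [h2, eventually_ge_atTop (Real.exp 1)] with x hx hex
  have hL : 1 ≤ Real.log x := by
    rw [← Real.log_exp 1]
    exact Real.log_le_log (Real.exp_pos 1) hex
  have hx0 : 0 < x := lt_of_lt_of_le (Real.exp_pos 1) hex
  have hLθ : Real.log x ^ θ = Real.log x ^ (θ - 1) * Real.log x := by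
    rw [← Real.rpow_add_one (by linarith : Real.log x ≠ 0) (θ - 1)]
    ring_nf
  have : c₀ * Real.log x ^ θ ≤ η * Real.log x := by
    rw [hLθ, ← mul_assoc]
    apply mul_le_mul_of_nonneg_right _ (by linarith)
    calc c₀ * Real.log x ^ (θ - 1) ≤ c₀ * (η / c₀) :=
          mul_le_mul_of_nonneg_left hx hc₀.le
      _ = η := by field_simp
  calc Real.exp (c₀ * Real.log x ^ θ) ≤ Real.exp (η * Real.log x) := Real.exp_le_exp.mpr this
    _ = x ^ η := by rw [Real.rpow_def_of_pos hx0, mul_comm]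

private lemma P_int (P : StieltjesFunction ℝ) (hP1 : P 1 = 0) {t : ℝ} (ht : 1 ≤ t) :
    ∫ u in Ioc 1 t, (Real.log u)⁻¹ * Real.log u ∂P.measure = P t := by
  have h : ∀ u ∈ Ioc (1:ℝ) t, (Real.log u)⁻¹ * Real.log u = 1 := fun u hu =>
    inv_mul_cancel₀ (ne_of_gt (Real.log_pos hu.1))
  rw [setIntegral_congr_fun measurableSet_Ioc h, setIntegral_const, measureReal_def, P.measure_Ioc,
    ENNReal.toReal_ofReal (sub_nonneg.mpr (P.mono ht)), hP1, sub_zero, smul_eq_mul, mul_one]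

private lemma Li_nonneg {t : ℝ} (ht : 1 ≤ t) : 0 ≤ Li t := by
  rw [Li, intervalIntegral.integral_of_le ht]
  exact setIntegral_nonneg measurableSet_Ioc fun u hu => fLi_nonneg hu.1

private lemma Li_le {t : ℝ} (ht : 1 ≤ t) : Li t ≤ t := by
  rw [Li, intervalIntegral.integral_of_le ht]
  calc ∫ u in Ioc 1 t, fLi u ≤ ∫ _ in Ioc 1 t, (1:ℝ) :=
        setIntegral_mono_on (fLi_intOn le_rfl)
          (integrableOn_const measure_Ioc_lt_top.ne) measurableSet_Ioc
          fun u hu => fLi_le_one hu.1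
    _ = t - 1 := by
        rw [setIntegral_const, Real.volume_real_Ioc_of_le (by linarith),
          smul_eq_mul, mul_one]
    _ ≤ t := by linarith

private lemma power_small {θ c₀ ρ : ℝ} (hθ1 : θ < 1) (hc₀ : 0 < c₀) (hρ : ρ < 1)
    (A ε' : ℝ) (hε' : 0 < ε') :
    ∀ᶠ x : ℝ in atTop, A * x ^ ρ ≤ ε' * (x * Real.exp (-c₀ * Real.log x ^ θ)) := by
  have hη : 0 < (1 - ρ)/2 := by linarith
  have h2 : ∀ᶠ x : ℝ in atTop, A ≤ ε' * x ^ ((1 - ρ)/2) := by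
    filter_upwards [(tendsto_rpow_atTop hη).eventually_ge_atTop (A / ε')] with x hx
    rw [div_le_iff₀ hε'] at hx
    linarith
  filter_upwards [expL_le hθ1 hc₀ hη, h2, eventually_ge_atTop (1:ℝ)] with x hx1 hx2 hx1'
  have hx0 : 0 < x := lt_of_lt_of_le one_pos hx1'
  have hexp : x ^ (-((1 - ρ)/2)) ≤ Real.exp (-(c₀ * Real.log x ^ θ)) := by
    rw [Real.rpow_neg hx0.le, Real.exp_neg]
    exact inv_anti₀ (Real.exp_pos _) hx1
  have hrw : -(c₀ * Real.log x ^ θ) = -c₀ * Real.log x ^ θ := by ring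
  calc A * x ^ ρ ≤ (ε' * x ^ ((1 - ρ)/2)) * x ^ ρ :=
        mul_le_mul_of_nonneg_right hx2 (Real.rpow_nonneg hx0.le ρ)
    _ = ε' * (x * x ^ (-((1 - ρ)/2))) := by
        rw [mul_assoc, ← Real.rpow_add hx0,
          show x * x ^ (-((1 - ρ)/2)) = x ^ (1:ℝ) * x ^ (-((1 - ρ)/2)) by rw [Real.rpow_one],
          ← Real.rpow_add hx0]
        congr 1
        ring
    _ ≤ ε' * (x * Real.exp (-c₀ * Real.log x ^ θ)) := by
        rw [← hrw]
        exact mul_le_mul_of_nonneg_left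
          (mul_le_mul_of_nonneg_left hexp hx0.le) hε'.le

end PiOmegaAux

set_option maxHeartbeats 2000000 in
/-- Let `Π` be a nondecreasing right-continuous function with `Π(1) = 0` satisfying the
Chebyshev bound `Π(x) ≪ x/log x`, let `ψ(x) = ∫₁^x log u dΠ(u)`, and let
`π(x) = ∫₁^x (1/log u) dψ(u) + O(√x)`.  If
`ψ(x) - x = Ω(x exp(-c'' (log x)^{β/(β+1)}))`, then for every `c > c''`,
`π(x) - Li(x) = Ω(x exp(-c (log x)^{β/(β+1)}))`, where `Li(x) = ∫₁^x (1-u⁻¹)/log u du`. -/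
theorem pi_omega (β c'' : ℝ) (hβ : β ∈ Set.Ioo (0:ℝ) 1) (hc'' : 0 < c'')
    (P : StieltjesFunction ℝ) (hP1 : P 1 = 0)
    (hcheb : ∃ C > 0, ∀ x : ℝ, 2 ≤ x → P x ≤ C * x / Real.log x)
    (ψ π : ℝ → ℝ)
    (hψ : ∀ x : ℝ, ψ x = ∫ u in Set.Ioc (1:ℝ) x, Real.log u ∂P.measure)
    (hπ : ∃ C > 0, ∀ x : ℝ, 1 ≤ x →
      |π x - ∫ u in Set.Ioc (1:ℝ) x, (Real.log u)⁻¹ * Real.log u ∂P.measure|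
        ≤ C * Real.sqrt x)
    (hΩ : ¬ (fun x : ℝ => ψ x - x) =o[atTop]
        fun x : ℝ => x * Real.exp (-c'' * Real.log x ^ (β / (β + 1)))) :
    ∀ c : ℝ, c'' < c →
      ¬ (fun x : ℝ => π x - ∫ u in (1:ℝ)..x, (1 - u⁻¹) / Real.log u) =o[atTop]
        fun x : ℝ => x * Real.exp (-c * Real.log x ^ (β / (β + 1))) := by
  obtain ⟨hβ0, hβ1⟩ := hβ
  intro c hcgt hlo
  apply hΩ
  set θ := β / (β + 1) with hθdef
  have hθ0 : 0 < θ := div_pos hβ0 (by linarith)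
  have hθ1 : θ < 1 := by
    rw [hθdef, div_lt_one (by linarith)]; linarith
  obtain ⟨C, hC0, hCbd⟩ := hπ
  obtain ⟨C₁, hC₁0, hch⟩ := hcheb
  have hc0 : 0 < c := lt_trans hc'' hcgt
  -- π vs P
  have hπP : ∀ t : ℝ, 1 ≤ t → |π t - P t| ≤ C * Real.sqrt t := by
    intro t ht
    have := hCbd t ht
    rwa [P_int P hP1 ht] at this
  -- P bounds
  have hP0 : ∀ t : ℝ, 1 ≤ t → 0 ≤ P t := fun t ht => hP1 ▸ P.mono ht
  have hlog2 : 0 < Real.log 2 := Real.log_pos one_lt_two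
  set K := 2 * C₁ / Real.log 2 with hKdef
  have hK0 : 0 < K := by positivity
  have hPK : ∀ t : ℝ, 1 ≤ t → P t ≤ K * t := by
    intro t ht
    rcases le_or_gt 2 t with h2 | h2
    · have hlt : Real.log 2 ≤ Real.log t := Real.log_le_log two_pos h2
      have h0t : 0 < Real.log t := lt_of_lt_of_le hlog2 hlt
      calc P t ≤ C₁ * t / Real.log t := hch t h2
        _ ≤ C₁ * t / Real.log 2 := by gcongr <;> positivity
        _ ≤ K * t := by rw [hKdef]; rw [div_mul_eq_mul_div]; gcongr ?_ / _; nlinarith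
    · calc P t ≤ P 2 := P.mono h2.le
        _ ≤ C₁ * 2 / Real.log 2 := hch 2 le_rfl
        _ = K := by rw [hKdef]; ring
        _ ≤ K * t := le_mul_of_one_le_right hK0.le ht
  -- crude bound on D
  have hDcrude : ∀ t : ℝ, 1 ≤ t → |P t - Li t| ≤ (K + 1) * t := by
    intro t ht
    have h1 := hP0 t ht
    have h2 := hPK t ht
    have h3 := Li_nonneg ht
    have h4 := Li_le ht
    rw [abs_le]
    constructor <;> [linarith only [h1,h2,h3,h4,ht]; linarith only [h1,h2,h3,h4,ht]]
  -- delta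
  set δ := ((c'' + c) / (2 * c)) ^ (1/θ : ℝ) with hδdef
  have hbase0 : 0 < (c'' + c) / (2 * c) := by positivity
  have hbase1 : (c'' + c) / (2 * c) < 1 := by
    rw [div_lt_one (by positivity)]; linarith
  have hδ0 : 0 < δ := Real.rpow_pos_of_pos hbase0 _
  have hδ1 : δ < 1 := Real.rpow_lt_one hbase0.le hbase1 (by positivity)
  set c₁ := (c'' + c) / 2 with hc₁def
  have hδθ : c * δ ^ θ = c₁ := by
    rw [hδdef, ← Real.rpow_mul hbase0.le, one_div, inv_mul_cancel₀ hθ0.ne', Real.rpow_one,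
      hc₁def]
    field_simp
  have hc₁gt : c'' < c₁ := by rw [hc₁def]; linarith
  -- threshold from hlo
  obtain ⟨x₁, hx₁⟩ := eventually_atTop.mp ((isLittleO_iff.mp hlo) one_pos)
  have hDfine : ∀ t : ℝ, 1 ≤ t → x₁ ≤ t →
      |P t - Li t| ≤ t * Real.exp (-c * Real.log t ^ θ) + C * Real.sqrt t := by
    intro t ht hxt
    have h1 := hx₁ t hxt
    simp only [Real.norm_eq_abs, one_mul] at h1
    have h2 : |π t - Li t| ≤ t * Real.exp (-c * Real.log t ^ θ) := by
      have habs : |t * Real.exp (-c * Real.log t ^ θ)| = t * Real.exp (-c * Real.log t ^ θ) := by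
        apply abs_of_nonneg; positivity
      rw [← habs]; exact h1
    have h3 := hπP t ht
    have := abs_sub_abs_le_abs_sub (π t - Li t) (π t - P t)
    calc |P t - Li t| = |(π t - Li t) - (π t - P t)| := by ring_nf
      _ ≤ |π t - Li t| + |π t - P t| := abs_sub _ _
      _ ≤ t * Real.exp (-c * Real.log t ^ θ) + C * Real.sqrt t := add_le_add h2 h3
  -- main o-statement
  rw [isLittleO_iff]
  intro ε hε
  set ρ := max (max δ (1 - δ/2)) (3/4 : ℝ) with hρdef
  have hρ1 : ρ < 1 := by
    apply max_lt (max_lt hδ1 (by linarith)) (by norm_num)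
  set Cpow := 4*C + (K+1) + C + 5 with hCpowdef
  have H3 := (asym1 hθ0 (show 0 < c - c'' by linarith)).eventually
    (eventually_le_nhds (show (0:ℝ) < ε/8 by positivity))
  have H4 := (exp_neg_small (show 0 < c₁ - c'' by linarith) hθ0).eventually
    (eventually_le_nhds (show (0:ℝ) < ε/8 by positivity))
  have H7 := power_small hθ1 hc'' hρ1 Cpow (ε/2) (by positivity)
  have H2 : ∀ᶠ x : ℝ in atTop, max x₁ 2 ≤ x ^ δ :=
    (tendsto_rpow_atTop hδ0).eventually_ge_atTop _
  filter_upwards [H2, H3, H4, H7, eventually_ge_atTop (Real.exp 1)]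
    with x hx2 hx3 hx4 hx7 hxe
  have hx1 : (1:ℝ) ≤ x := le_trans (by linarith only [Real.add_one_le_exp (1:ℝ)]) hxe
  have hx0 : (0:ℝ) < x := lt_of_lt_of_le one_pos hx1
  have hL1 : 1 ≤ Real.log x := by
    rw [← Real.log_exp 1]; exact Real.log_le_log (Real.exp_pos 1) hxe
  have hL0 : 0 ≤ Real.log x := by linarith
  set L := Real.log x with hLdef
  set y := x ^ δ with hydef
  have h2y : 2 ≤ y := le_trans (le_max_right _ _) hx2
  have hx₁y : x₁ ≤ y := le_trans (le_max_left _ _) hx2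
  have h1y : 1 ≤ y := by linarith
  have hy0 : 0 < y := by linarith
  have hyx : y ≤ x := by
    rw [hydef]
    calc x ^ δ ≤ x ^ (1:ℝ) := Real.rpow_le_rpow_of_exponent_le hx1 hδ1.le
      _ = x := Real.rpow_one x
  have hlogy : Real.log y = δ * L := Real.log_rpow hx0 δ
  -- key identity
  obtain ⟨hintD, hkey⟩ := key_identity P hx1
  rw [← hψ x] at hkey
  set G := x * Real.exp (-c'' * L ^ θ) with hGdef
  have hG0 : (0:ℝ) ≤ G := by positivity
  set I := ∫ t in Ico 1 x, (P t - Li t) / t ∂volume with hIdef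
  have habsint : IntegrableOn (fun t => |(P t - Li t) / t|) (Ico 1 x) volume := hintD.abs
  have hIabs : |I| ≤ ∫ t in Ico 1 x, |(P t - Li t) / t| ∂volume := by
    rw [hIdef, ← Real.norm_eq_abs]
    exact (norm_integral_le_integral_norm _).trans_eq (by simp only [Real.norm_eq_abs])
  have hsplit : ∫ t in Ico 1 x, |(P t - Li t) / t| ∂volume
      = (∫ t in Ico 1 y, |(P t - Li t) / t| ∂volume)
        + ∫ t in Ico y x, |(P t - Li t) / t| ∂volume := by
    rw [← setIntegral_union Set.Ico_disjoint_Ico_same measurableSet_Ico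
      (habsint.mono_set (Ico_subset_Ico_right hyx))
      (habsint.mono_set (Ico_subset_Ico_left h1y)), Ico_union_Ico_eq_Ico h1y hyx]
  have hb1 : ∫ t in Ico 1 y, |(P t - Li t) / t| ∂volume ≤ (K + 1) * y := by
    calc ∫ t in Ico 1 y, |(P t - Li t) / t| ∂volume ≤ ∫ _ in Ico 1 y, (K + 1 : ℝ) ∂volume := by
          apply setIntegral_mono_on (habsint.mono_set (Ico_subset_Ico_right hyx))
            (integrableOn_const measure_Ico_lt_top.ne) measurableSet_Ico
          intro t ht
          have ht0 : (0:ℝ) < t := by linarith only [ht.1]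
          rw [abs_div, abs_of_pos ht0, div_le_iff₀ ht0]
          exact hDcrude t ht.1
      _ = (y - 1) * (K + 1) := by
          rw [setIntegral_const, Real.volume_real_Ico_of_le (by linarith only [h1y]), smul_eq_mul]
      _ ≤ (K + 1) * y := by
          rw [mul_comm]
          exact mul_le_mul_of_nonneg_left (by linarith only []) (by positivity)
  set B2 := Real.exp (-c₁ * L ^ θ) + C / Real.sqrt y with hB2def
  have hb2 : ∫ t in Ico y x, |(P t - Li t) / t| ∂volume ≤ x * Real.exp (-c₁ * L ^ θ)
      + C / Real.sqrt y * x := by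
    have hB20 : (0:ℝ) ≤ B2 := by positivity
    calc ∫ t in Ico y x, |(P t - Li t) / t| ∂volume ≤ ∫ _ in Ico y x, B2 ∂volume := by
          apply setIntegral_mono_on (habsint.mono_set (Ico_subset_Ico_left h1y))
            (integrableOn_const measure_Ico_lt_top.ne) measurableSet_Ico
          intro t ht
          have ht1 : (1:ℝ) ≤ t := le_trans h1y ht.1
          have ht0 : (0:ℝ) < t := by linarith only [ht1]
          rw [abs_div, abs_of_pos ht0, div_le_iff₀ ht0]
          have hd := hDfine t ht1 (le_trans hx₁y ht.1)
          have e1 : Real.exp (-c * Real.log t ^ θ) ≤ Real.exp (-c₁ * L ^ θ) := by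
            apply Real.exp_le_exp.mpr
            have hlt : δ * L ≤ Real.log t := by
              rw [← hlogy]; exact Real.log_le_log hy0 ht.1
            have hδL0 : (0:ℝ) ≤ δ * L := by positivity
            have hr : (δ * L) ^ θ ≤ Real.log t ^ θ := Real.rpow_le_rpow hδL0 hlt hθ0.le
            have hmul : (δ * L) ^ θ = δ ^ θ * L ^ θ := Real.mul_rpow hδ0.le hL0
            have : c₁ * L ^ θ ≤ c * Real.log t ^ θ := by
              calc c₁ * L ^ θ = c * (δ ^ θ * L ^ θ) := by rw [← hδθ]; ring
                _ = c * (δ * L) ^ θ := by rw [hmul]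
                _ ≤ c * Real.log t ^ θ := mul_le_mul_of_nonneg_left hr hc0.le
            linarith only [this]
          have e2 : C * Real.sqrt t ≤ C / Real.sqrt y * t := by
            rw [div_mul_eq_mul_div, le_div_iff₀ (Real.sqrt_pos.mpr hy0)]
            have h1 : Real.sqrt y ≤ Real.sqrt t := Real.sqrt_le_sqrt ht.1
            have h2 : Real.sqrt t * Real.sqrt t = t := Real.mul_self_sqrt (by linarith only [ht0])
            calc C * Real.sqrt t * Real.sqrt y ≤ C * Real.sqrt t * Real.sqrt t :=
                  mul_le_mul_of_nonneg_left h1 (mul_nonneg hC0.le (Real.sqrt_nonneg t))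
              _ = C * t := by rw [mul_assoc, h2]
          calc |P t - Li t| ≤ t * Real.exp (-c * Real.log t ^ θ) + C * Real.sqrt t := hd
            _ ≤ t * Real.exp (-c₁ * L ^ θ) + C / Real.sqrt y * t :=
                add_le_add (mul_le_mul_of_nonneg_left e1 (by linarith only [ht1])) e2
            _ = B2 * t := by rw [hB2def]; ring
      _ = (x - y) * B2 := by
          rw [setIntegral_const, Real.volume_real_Ico_of_le (by linarith only [hyx]), smul_eq_mul]
      _ ≤ x * B2 := mul_le_mul_of_nonneg_right (sub_le_self x hy0.le) hB20
      _ = x * Real.exp (-c₁ * L ^ θ) + C / Real.sqrt y * x := by rw [hB2def]; ring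
  -- bound the boundary term
  have hx₁x : x₁ ≤ x := le_trans hx₁y hyx
  have hDx : |(P x - Li x) * L| ≤ (x * Real.exp (-c * L ^ θ) + C * Real.sqrt x) * L := by
    rw [abs_mul, abs_of_nonneg hL0]
    exact mul_le_mul_of_nonneg_right (hDfine x hx1 hx₁x) hL0
  have hterm1 : x * Real.exp (-c * L ^ θ) * L ≤ ε / 8 * G := by
    have hsplitc : Real.exp (-c * L ^ θ)
        = Real.exp (-(c - c'') * L ^ θ) * Real.exp (-c'' * L ^ θ) := by
      rw [← Real.exp_add]; congr 1; ring
    calc x * Real.exp (-c * L ^ θ) * L = (L * Real.exp (-(c - c'') * L ^ θ)) * G := by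
          rw [hsplitc, hGdef]; ring
      _ ≤ ε / 8 * G := mul_le_mul_of_nonneg_right hx3 hG0
  have hterm2 : x * Real.exp (-c₁ * L ^ θ) ≤ ε / 8 * G := by
    have hsplitc : Real.exp (-c₁ * L ^ θ)
        = Real.exp (-(c₁ - c'') * L ^ θ) * Real.exp (-c'' * L ^ θ) := by
      rw [← Real.exp_add]; congr 1; ring
    calc x * Real.exp (-c₁ * L ^ θ) = Real.exp (-(c₁ - c'') * L ^ θ) * G := by
          rw [hsplitc, hGdef]; ring
      _ ≤ ε / 8 * G := mul_le_mul_of_nonneg_right hx4 hG0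
  -- power terms
  have hlogle : L ≤ 4 * x ^ (1/4 : ℝ) := by
    have h := Real.log_le_sub_one_of_pos (Real.rpow_pos_of_pos hx0 (1/4 : ℝ))
    rw [Real.log_rpow hx0] at h
    linarith only [h]
  have hq : x ^ (1/2 : ℝ) * x ^ (1/4 : ℝ) = x ^ (3/4 : ℝ) := by
    rw [← Real.rpow_add hx0]; norm_num
  have hx14 : x ^ (1/4 : ℝ) ≤ x ^ (3/4 : ℝ) :=
    Real.rpow_le_rpow_of_exponent_le hx1 (by norm_num)
  have hCsx : C * Real.sqrt x * L ≤ 4 * C * x ^ (3/4 : ℝ) := by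
    have h0 : (0:ℝ) ≤ x ^ (1/2 : ℝ) := (Real.rpow_pos_of_pos hx0 _).le
    calc C * Real.sqrt x * L = C * (x ^ (1/2 : ℝ) * L) := by rw [Real.sqrt_eq_rpow]; ring
      _ ≤ C * (x ^ (1/2 : ℝ) * (4 * x ^ (1/4 : ℝ))) :=
          mul_le_mul_of_nonneg_left (mul_le_mul_of_nonneg_left hlogle h0) hC0.le
      _ = 4 * C * x ^ (3/4 : ℝ) := by
          rw [show x ^ (1/2:ℝ) * (4 * x ^ (1/4:ℝ)) = 4 * (x ^ (1/2:ℝ) * x ^ (1/4:ℝ)) by ring, hq]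
          ring
  have honeL : 1 + L ≤ 5 * x ^ (3/4 : ℝ) := by
    have h1 : (1:ℝ) ≤ x ^ (3/4 : ℝ) := Real.one_le_rpow hx1 (by norm_num)
    linarith only [h1, hlogle, hx14]
  have hxδρ : x ^ δ ≤ x ^ ρ :=
    Real.rpow_le_rpow_of_exponent_le hx1 (le_trans (le_max_left _ _) (le_max_left _ _))
  have hx34ρ : x ^ (3/4 : ℝ) ≤ x ^ ρ :=
    Real.rpow_le_rpow_of_exponent_le hx1 (le_max_right _ _)
  have hx1δρ : x ^ (1 - δ/2 : ℝ) ≤ x ^ ρ :=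
    Real.rpow_le_rpow_of_exponent_le hx1 (le_trans (le_max_right _ _) (le_max_left _ _))
  have hCyx : C / Real.sqrt y * x = C * x ^ (1 - δ/2 : ℝ) := by
    have hsy : Real.sqrt y = x ^ (δ/2 : ℝ) := by
      rw [hydef, Real.sqrt_eq_rpow, ← Real.rpow_mul hx0.le]
      congr 1; ring
    rw [hsy, div_mul_eq_mul_div, mul_div_assoc,
      show x / x ^ (δ/2 : ℝ) = x ^ (1 - δ/2 : ℝ) by
        rw [Real.rpow_sub hx0, Real.rpow_one]]
  have hpowsum : C * Real.sqrt x * L + (K + 1) * y + C / Real.sqrt y * x + (1 + L)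
      ≤ Cpow * x ^ ρ := by
    rw [hCyx, hydef]
    have e1 : 4 * C * x ^ (3/4 : ℝ) ≤ 4 * C * x ^ ρ :=
      mul_le_mul_of_nonneg_left hx34ρ (by positivity)
    have e2 : (K + 1) * x ^ δ ≤ (K + 1) * x ^ ρ :=
      mul_le_mul_of_nonneg_left hxδρ (by positivity)
    have e3 : C * x ^ (1 - δ/2 : ℝ) ≤ C * x ^ ρ :=
      mul_le_mul_of_nonneg_left hx1δρ hC0.le
    have e4 : 5 * x ^ (3/4 : ℝ) ≤ 5 * x ^ ρ :=
      mul_le_mul_of_nonneg_left hx34ρ (by norm_num)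
    rw [hCpowdef]
    linarith only [e1, e2, e3, e4, hCsx, honeL]
  -- assemble
  have hfinal1 : |ψ x - x| ≤ |(P x - Li x) * L| + |I| + (1 + L) := by
    rw [hkey]
    calc |(P x - Li x) * L - I - 1 - L| = |((P x - Li x) * L - I) - (1 + L)| := by ring_nf
      _ ≤ |(P x - Li x) * L - I| + |1 + L| := abs_sub _ _
      _ ≤ (|(P x - Li x) * L| + |I|) + (1 + L) := by
          have h1 := abs_sub ((P x - Li x) * L) I
          have h2 : |1 + L| = 1 + L := abs_of_nonneg (by linarith only [hL0])
          linarith only [h1, h2]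
  have hIbound : |I| ≤ (K + 1) * y + (x * Real.exp (-c₁ * L ^ θ) + C / Real.sqrt y * x) := by
    rw [hsplit] at hIabs
    linarith only [hIabs, hb1, hb2]
  have hpow7 : Cpow * x ^ ρ ≤ ε / 2 * G := hx7
  rw [Real.norm_eq_abs, Real.norm_eq_abs, abs_of_nonneg hG0]
  calc |ψ x - x| ≤ |(P x - Li x) * L| + |I| + (1 + L) := hfinal1
    _ ≤ (x * Real.exp (-c * L ^ θ) + C * Real.sqrt x) * L
        + ((K + 1) * y + (x * Real.exp (-c₁ * L ^ θ) + C / Real.sqrt y * x)) + (1 + L) := by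
        linarith only [hDx, hIbound]
    _ = x * Real.exp (-c * L ^ θ) * L + x * Real.exp (-c₁ * L ^ θ)
        + (C * Real.sqrt x * L + (K + 1) * y + C / Real.sqrt y * x + (1 + L)) := by ring
    _ ≤ ε / 8 * G + ε / 8 * G + Cpow * x ^ ρ := by linarith only [hterm1, hterm2, hpowsum]
    _ ≤ ε / 8 * G + ε / 8 * G + ε / 2 * G := by linarith only [hpow7]
    _ ≤ ε * G := by linarith only [mul_nonneg hε.le hG0]
end
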